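/- arXiv:1703.02407 — 4 statements merged into one kernel-verified Lean document; each statement's English description precedes it below -/
import Mathlib

section
/- Let R = 5.573412. For every real x ≥ 851, ∫₃ˣ (8/(π√R))^{1/2} (log t)^{-7/4} e^{-√(log t / R)} dt ≤ (2/(π√R))^{1/2} · x · (log x)^{-3/4} · e^{-√(log x / R)}. -/
set_option maxHeartbeats 2000000

open Real MeasureTheory intervalIntegral

noncomputable def gf (t : ℝ) : ℝ :=
  (Real.log t) ^ (-(7:ℝ)/4) * Real.exp (-Real.sqrt (Real.log t / 5.573412))

noncomputable def Df (t : ℝ) : ℝ :=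
  Real.exp (-Real.sqrt (Real.log t / 5.573412)) *
    ((Real.log t) ^ (-(7:ℝ)/4) * (Real.log t - 3/4 - Real.sqrt (Real.log t / 5.573412)/2))

noncomputable def G0 (x : ℝ) : ℝ :=
  x * (Real.log x) ^ (-(3:ℝ)/4) * Real.exp (-Real.sqrt (Real.log x / 5.573412))

lemma exp_lb (y : ℝ) (n : ℕ) (hn : 0 < n) (hy : 0 ≤ y) :
    (1 + y / n) ^ n ≤ Real.exp y := by
  have h : Real.exp y = Real.exp (y / n) ^ n := by
    rw [← Real.exp_nat_mul]
    congr 1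
    field_simp
  rw [h]
  refine pow_le_pow_left₀ (by positivity) ?_ n
  have := Real.add_one_le_exp (y / n)
  linarith

lemma exp_ub (y : ℝ) (n : ℕ) (hy : 0 ≤ y) (hn : y < n) :
    Real.exp y ≤ ((1 - y / n)⁻¹) ^ n := by
  have hn0 : 0 < (n:ℝ) := lt_of_le_of_lt hy hn
  have h1 : (0:ℝ) < 1 - y / n := by
    rw [sub_pos]
    exact (div_lt_one hn0).2 hn
  have h2 : 1 - y / n ≤ Real.exp (-(y / n)) := by
    have := Real.add_one_le_exp (-(y / n)); linarith
  have key : Real.exp (y / n) * (1 - y / n) ≤ 1 := by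
    calc Real.exp (y / n) * (1 - y / n) ≤ Real.exp (y / n) * Real.exp (-(y / n)) :=
          mul_le_mul_of_nonneg_left h2 (Real.exp_pos _).le
      _ = 1 := by rw [← Real.exp_add]; simp
  have h3 : Real.exp (y / n) ≤ (1 - y / n)⁻¹ := by
    rw [inv_eq_one_div, le_div_iff₀ h1]
    exact key
  calc Real.exp y = Real.exp (y / n) ^ n := by
        rw [← Real.exp_nat_mul]; congr 1; field_simp
    _ ≤ ((1 - y / n)⁻¹) ^ n := pow_le_pow_left₀ (Real.exp_pos _).le h3 n

lemma log_lb (t : ℝ) (k : ℕ) (r : ℝ) (hr0 : 0 ≤ r) (hr : r < 256) (ht : 0 < t)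
    (h : 2.7182818286 ^ k * ((1 - r / 256)⁻¹) ^ (256:ℕ) ≤ t) :
    (k : ℝ) + r ≤ Real.log t := by
  rw [Real.le_log_iff_exp_le ht, Real.exp_add]
  calc Real.exp (k:ℝ) * Real.exp r
      ≤ 2.7182818286 ^ k * ((1 - r / 256)⁻¹) ^ (256:ℕ) := by
        apply mul_le_mul
        · rw [← Real.exp_one_rpow (k:ℝ), Real.rpow_natCast]
          exact pow_le_pow_left₀ (Real.exp_pos 1).le Real.exp_one_lt_d9.le k
        · exact exp_ub r 256 hr0 (by norm_num [hr])
        · exact (Real.exp_pos r).le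
        · positivity
    _ ≤ t := h

lemma log_ub (t u : ℝ) (ht : 0 < t) (hu : 0 ≤ u)
    (h : t ≤ (1 + u / 512) ^ (512:ℕ)) : Real.log t ≤ u := by
  rw [Real.log_le_iff_le_exp ht]
  exact h.trans (exp_lb u 512 (by norm_num) hu)

lemma gf_le (l a s q : ℝ) (hl1 : 1 ≤ l) (ha : 0 < a) (ha4 : 1 ≤ a ^ 4 * l ^ 7)
    (hs0 : 0 ≤ s) (hs : s ^ 2 * 5.573412 ≤ l) (hq : 0 < q)
    (hq' : 1 ≤ (1 + s / 16) ^ (16:ℕ) * q) :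
    ∀ t : ℝ, l ≤ Real.log t → gf t ≤ a * q := by
  intro t hlt
  have hl0 : 0 < l := lt_of_lt_of_le one_pos hl1
  have hL0 : 0 < Real.log t := lt_of_lt_of_le hl0 hlt
  have h1 : (Real.log t) ^ (-(7:ℝ)/4) ≤ l ^ (-(7:ℝ)/4) :=
    Real.rpow_le_rpow_of_nonpos hl0 hlt (by norm_num)
  have hlp : 0 < l ^ ((7:ℝ)/4) := Real.rpow_pos_of_pos hl0 _
  have h2 : l ^ (-(7:ℝ)/4) ≤ a := by
    have hrp : (l ^ ((7:ℝ)/4)) ^ (4:ℕ) = l ^ (7:ℕ) := by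
      rw [← Real.rpow_natCast (l ^ ((7:ℝ)/4)) 4, ← Real.rpow_mul hl0.le,
        ← Real.rpow_natCast l 7]
      norm_num
    have h4 : 1 ≤ (a * l ^ ((7:ℝ)/4)) ^ (4:ℕ) := by
      rw [mul_pow, hrp]; exact_mod_cast ha4
    have hkey : 1 ≤ a * l ^ ((7:ℝ)/4) := by
      by_contra hc
      push_neg at hc
      have hlt1 : (a * l ^ ((7:ℝ)/4)) ^ (4:ℕ) < 1 :=
        pow_lt_one₀ (by positivity) hc (by norm_num)
      linarith
    rw [show (-(7:ℝ)/4) = -((7:ℝ)/4) by norm_num, Real.rpow_neg hl0.le,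
      inv_eq_one_div, div_le_iff₀ hlp]
    linarith [hkey]
  have h3 : Real.exp (-Real.sqrt (Real.log t / 5.573412)) ≤ q := by
    have hsl : s ≤ Real.sqrt (Real.log t / 5.573412) := by
      apply Real.le_sqrt_of_sq_le
      rw [le_div_iff₀ (by norm_num)]
      calc s ^ 2 * 5.573412 ≤ l := hs
        _ ≤ Real.log t := hlt
    have hexp : 1 / q ≤ Real.exp s := by
      calc 1 / q ≤ (1 + s / 16) ^ (16:ℕ) := by
            rw [div_le_iff₀ hq]; linarith [hq']
        _ ≤ Real.exp s := exp_lb s 16 (by norm_num) hs0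
    have key : 1 ≤ Real.exp s * q := (div_le_iff₀ hq).1 hexp
    calc Real.exp (-Real.sqrt (Real.log t / 5.573412))
        ≤ Real.exp (-s) := Real.exp_le_exp.2 (by linarith)
      _ ≤ q := by
          rw [Real.exp_neg, inv_eq_one_div, div_le_iff₀ (Real.exp_pos s)]
          linarith [key]
  calc gf t ≤ l ^ (-(7:ℝ)/4) * Real.exp (-Real.sqrt (Real.log t / 5.573412)) := by
        unfold gf
        apply mul_le_mul_of_nonneg_right h1 (Real.exp_pos _).le
    _ ≤ a * q := mul_le_mul h2 h3 (Real.exp_pos _).le ha.le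

lemma log3_pos {t : ℝ} (ht : 3 ≤ t) : 0 < Real.log t :=
  Real.log_pos (by linarith)

lemma gf_contAt {t : ℝ} (ht : 3 ≤ t) : ContinuousAt gf t := by
  have ht0 : t ≠ 0 := by linarith
  have hL : Real.log t ≠ 0 := (log3_pos ht).ne'
  have hc : ContinuousAt Real.log t := Real.continuousAt_log ht0
  exact (hc.rpow_const (Or.inl hL)).mul (((hc.div_const _).sqrt.neg).rexp)

lemma Df_contAt {t : ℝ} (ht : 3 ≤ t) : ContinuousAt Df t := by
  have ht0 : t ≠ 0 := by linarith
  have hL : Real.log t ≠ 0 := (log3_pos ht).ne'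
  have hc : ContinuousAt Real.log t := Real.continuousAt_log ht0
  exact (((hc.div_const _).sqrt.neg).rexp).mul
    ((hc.rpow_const (Or.inl hL)).mul (((hc.sub continuousAt_const).sub
      ((hc.div_const _).sqrt.div_const _))))

lemma gf_integrable {a b : ℝ} (ha : 3 ≤ a) (hb : 3 ≤ b) :
    IntervalIntegrable gf MeasureTheory.volume a b := by
  apply ContinuousOn.intervalIntegrable
  intro t htm
  have h3 : 3 ≤ t := by
    rcases Set.mem_uIcc.1 htm with h | h
    · exact le_trans ha h.1
    · exact le_trans hb h.1
  exact (gf_contAt h3).continuousWithinAt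

lemma Df_integrable {a b : ℝ} (ha : 3 ≤ a) (hb : 3 ≤ b) :
    IntervalIntegrable Df MeasureTheory.volume a b := by
  apply ContinuousOn.intervalIntegrable
  intro t htm
  have h3 : 3 ≤ t := by
    rcases Set.mem_uIcc.1 htm with h | h
    · exact le_trans ha h.1
    · exact le_trans hb h.1
  exact (Df_contAt h3).continuousWithinAt

lemma int_piece (a b A : ℝ) (h3 : 3 ≤ a) (hab : a ≤ b)
    (hA : ∀ t : ℝ, Real.log a ≤ Real.log t → gf t ≤ A) :
    ∫ t in a..b, gf t ≤ (b - a) * A := by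
  have hi : IntervalIntegrable gf MeasureTheory.volume a b := gf_integrable h3 (h3.trans hab)
  calc ∫ t in a..b, gf t ≤ ∫ _ in a..b, A := by
        apply intervalIntegral.integral_mono_on hab hi (intervalIntegrable_const)
        intro t htm
        exact hA t (Real.log_le_log (by linarith) htm.1)
    _ = (b - a) * A := by simp [smul_eq_mul, mul_comm]

lemma G0_hasDeriv {t : ℝ} (ht6 : 6 ≤ Real.log t) (ht0 : 0 < t) :
    HasDerivAt G0 (Df t) t := by
  have hL0 : 0 < Real.log t := by linarith
  have hR : (0:ℝ) < 5.573412 := by norm_num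
  have hLR : 0 < Real.log t / 5.573412 := div_pos hL0 hR
  have hs0 : 0 < Real.sqrt (Real.log t / 5.573412) := Real.sqrt_pos.2 hLR
  have h1 : HasDerivAt Real.log t⁻¹ t := Real.hasDerivAt_log ht0.ne'
  have h2 : HasDerivAt (fun y => Real.log y ^ (-(3:ℝ)/4))
      (t⁻¹ * (-(3:ℝ)/4) * Real.log t ^ ((-(3:ℝ)/4) - 1)) t :=
    h1.rpow_const (Or.inl hL0.ne')
  have h3 : HasDerivAt (fun y => Real.log y / 5.573412) (t⁻¹ / 5.573412) t :=
    h1.div_const _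
  have h4 : HasDerivAt (fun y => Real.sqrt (Real.log y / 5.573412))
      (t⁻¹ / 5.573412 / (2 * Real.sqrt (Real.log t / 5.573412))) t :=
    h3.sqrt hLR.ne'
  have h5 : HasDerivAt (fun y => Real.exp (-Real.sqrt (Real.log y / 5.573412)))
      (Real.exp (-Real.sqrt (Real.log t / 5.573412)) *
        -(t⁻¹ / 5.573412 / (2 * Real.sqrt (Real.log t / 5.573412)))) t :=
    (h4.neg).exp
  have h6 : HasDerivAt (fun y => y * Real.log y ^ (-(3:ℝ)/4))
      (1 * Real.log t ^ (-(3:ℝ)/4) +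
        t * (t⁻¹ * (-(3:ℝ)/4) * Real.log t ^ ((-(3:ℝ)/4) - 1))) t :=
    (hasDerivAt_id t).mul h2
  have h7 := h6.mul h5
  have heq : (1 * Real.log t ^ (-(3:ℝ)/4) +
        t * (t⁻¹ * (-(3:ℝ)/4) * Real.log t ^ ((-(3:ℝ)/4) - 1))) *
        Real.exp (-Real.sqrt (Real.log t / 5.573412)) +
      (t * Real.log t ^ (-(3:ℝ)/4)) *
        (Real.exp (-Real.sqrt (Real.log t / 5.573412)) *
          -(t⁻¹ / 5.573412 / (2 * Real.sqrt (Real.log t / 5.573412)))) = Df t := by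
    unfold Df
    have htt : t⁻¹ * t = 1 := inv_mul_cancel₀ ht0.ne'
    have he1 : Real.log t ^ ((-(3:ℝ)/4) - 1) = Real.log t ^ (-(7:ℝ)/4) := by
      norm_num
    have he2 : Real.log t ^ (-(3:ℝ)/4) = Real.log t ^ (-(7:ℝ)/4) * Real.log t := by
      rw [← Real.rpow_add_one hL0.ne' (-(7:ℝ)/4)]
      norm_num
    set s := Real.sqrt (Real.log t / 5.573412) with hsdef
    set q := Real.log t ^ (-(7:ℝ)/4) with hqdef
    have hss : s * s = Real.log t / 5.573412 := Real.mul_self_sqrt hLR.le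
    have hLs : Real.log t = s * s * 5.573412 := by
      rw [hss]; field_simp
    rw [he1, he2, hLs]
    field_simp
    ring
  rw [heq] at h7
  unfold G0
  exact h7

lemma sum_bound : ∫ t in (3:ℝ)..851, gf t ≤ (2417/125 : ℝ) := by
  
  have hl0 : (549/500 : ℝ) ≤ Real.log 3 := by
    have h := log_lb 3 1 (49/500 : ℝ) (by norm_num) (by norm_num) (by norm_num) (by norm_num)
    push_cast at h
    linarith
  have p0 : ∫ t in (3:ℝ)..4, gf t ≤ (4 - 3) * ((33963/40000 : ℝ) * (645483/1000000 : ℝ)) :=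
    int_piece 3 4 _ (by norm_num) (by norm_num) (fun t ht =>
      gf_le (549/500 : ℝ) (33963/40000 : ℝ) (2219/5000 : ℝ) (645483/1000000 : ℝ) (by norm_num) (by norm_num) (by norm_num)
        (by norm_num) (by norm_num) (by norm_num) (by norm_num) t (le_trans hl0 ht))
  
  have hl1 : (693/500 : ℝ) ≤ Real.log 4 := by
    have h := log_lb 4 1 (193/500 : ℝ) (by norm_num) (by norm_num) (by norm_num) (by norm_num)
    push_cast at h
    linarith
  have p1 : ∫ t in (4:ℝ)..5, gf t ≤ (5 - 4) * ((282413/500000 : ℝ) * (612021/1000000 : ℝ)) :=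
    int_piece 4 5 _ (by norm_num) (by norm_num) (fun t ht =>
      gf_le (693/500 : ℝ) (282413/500000 : ℝ) (2493/5000 : ℝ) (612021/1000000 : ℝ) (by norm_num) (by norm_num) (by norm_num)
        (by norm_num) (by norm_num) (by norm_num) (by norm_num) t (le_trans hl1 ht))
  
  have hl2 : (201/125 : ℝ) ≤ Real.log 5 := by
    have h := log_lb 5 1 (76/125 : ℝ) (by norm_num) (by norm_num) (by norm_num) (by norm_num)
    push_cast at h
    linarith
  have p2 : ∫ t in (5:ℝ)..6, gf t ≤ (6 - 5) * ((54439/125000 : ℝ) * (294809/500000 : ℝ)) :=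
    int_piece 5 6 _ (by norm_num) (by norm_num) (fun t ht =>
      gf_le (201/125 : ℝ) (54439/125000 : ℝ) (5371/10000 : ℝ) (294809/500000 : ℝ) (by norm_num) (by norm_num) (by norm_num)
        (by norm_num) (by norm_num) (by norm_num) (by norm_num) t (le_trans hl2 ht))
  
  have hl3 : (179/100 : ℝ) ≤ Real.log 6 := by
    have h := log_lb 6 1 (79/100 : ℝ) (by norm_num) (by norm_num) (by norm_num) (by norm_num)
    push_cast at h
    linarith
  have p3 : ∫ t in (6:ℝ)..8, gf t ≤ (8 - 6) * ((361/1000 : ℝ) * (286493/500000 : ℝ)) :=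
    int_piece 6 8 _ (by norm_num) (by norm_num) (fun t ht =>
      gf_le (179/100 : ℝ) (361/1000 : ℝ) (5667/10000 : ℝ) (286493/500000 : ℝ) (by norm_num) (by norm_num) (by norm_num)
        (by norm_num) (by norm_num) (by norm_num) (by norm_num) t (le_trans hl3 ht))
  
  have hl4 : (2079/1000 : ℝ) ≤ Real.log 8 := by
    have h := log_lb 8 2 (79/1000 : ℝ) (by norm_num) (by norm_num) (by norm_num) (by norm_num)
    push_cast at h
    linarith
  have p4 : ∫ t in (8:ℝ)..10, gf t ≤ (10 - 8) * ((55563/200000 : ℝ) * (274589/500000 : ℝ)) :=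
    int_piece 8 10 _ (by norm_num) (by norm_num) (fun t ht =>
      gf_le (2079/1000 : ℝ) (55563/200000 : ℝ) (6107/10000 : ℝ) (274589/500000 : ℝ) (by norm_num) (by norm_num) (by norm_num)
        (by norm_num) (by norm_num) (by norm_num) (by norm_num) t (le_trans hl4 ht))
  
  have hl5 : (1151/500 : ℝ) ≤ Real.log 10 := by
    have h := log_lb 10 2 (151/500 : ℝ) (by norm_num) (by norm_num) (by norm_num) (by norm_num)
    push_cast at h
    linarith
  have p5 : ∫ t in (10:ℝ)..13, gf t ≤ (13 - 10) * ((232443/1000000 : ℝ) * (16643/31250 : ℝ)) :=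
    int_piece 10 13 _ (by norm_num) (by norm_num) (fun t ht =>
      gf_le (1151/500 : ℝ) (232443/1000000 : ℝ) (3213/5000 : ℝ) (16643/31250 : ℝ) (by norm_num) (by norm_num) (by norm_num)
        (by norm_num) (by norm_num) (by norm_num) (by norm_num) t (le_trans hl5 ht))
  
  have hl6 : (641/250 : ℝ) ≤ Real.log 13 := by
    have h := log_lb 13 2 (141/250 : ℝ) (by norm_num) (by norm_num) (by norm_num) (by norm_num)
    push_cast at h
    linarith
  have p6 : ∫ t in (13:ℝ)..17, gf t ≤ (17 - 13) * ((48121/250000 : ℝ) * (20587/40000 : ℝ)) :=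
    int_piece 13 17 _ (by norm_num) (by norm_num) (fun t ht =>
      gf_le (641/250 : ℝ) (48121/250000 : ℝ) (3391/5000 : ℝ) (20587/40000 : ℝ) (by norm_num) (by norm_num) (by norm_num)
        (by norm_num) (by norm_num) (by norm_num) (by norm_num) t (le_trans hl6 ht))
  
  have hl7 : (2831/1000 : ℝ) ≤ Real.log 17 := by
    have h := log_lb 17 2 (831/1000 : ℝ) (by norm_num) (by norm_num) (by norm_num) (by norm_num)
    push_cast at h
    linarith
  have p7 : ∫ t in (17:ℝ)..22, gf t ≤ (22 - 17) * ((20231/125000 : ℝ) * (497937/1000000 : ℝ)) :=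
    int_piece 17 22 _ (by norm_num) (by norm_num) (fun t ht =>
      gf_le (2831/1000 : ℝ) (20231/125000 : ℝ) (7127/10000 : ℝ) (497937/1000000 : ℝ) (by norm_num) (by norm_num) (by norm_num)
        (by norm_num) (by norm_num) (by norm_num) (by norm_num) t (le_trans hl7 ht))
  
  have hl8 : (3091/1000 : ℝ) ≤ Real.log 22 := by
    have h := log_lb 22 3 (91/1000 : ℝ) (by norm_num) (by norm_num) (by norm_num) (by norm_num)
    push_cast at h
    linarith
  have p8 : ∫ t in (22:ℝ)..28, gf t ≤ (28 - 22) * ((6939/50000 : ℝ) * (30183/62500 : ℝ)) :=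
    int_piece 22 28 _ (by norm_num) (by norm_num) (fun t ht =>
      gf_le (3091/1000 : ℝ) (6939/50000 : ℝ) (7447/10000 : ℝ) (30183/62500 : ℝ) (by norm_num) (by norm_num) (by norm_num)
        (by norm_num) (by norm_num) (by norm_num) (by norm_num) t (le_trans hl8 ht))
  
  have hl9 : (3331/1000 : ℝ) ≤ Real.log 28 := by
    have h := log_lb 28 3 (331/1000 : ℝ) (by norm_num) (by norm_num) (by norm_num) (by norm_num)
    push_cast at h
    linarith
  have p9 : ∫ t in (28:ℝ)..36, gf t ≤ (36 - 28) * ((60879/500000 : ℝ) * (94011/200000 : ℝ)) :=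
    int_piece 28 36 _ (by norm_num) (by norm_num) (fun t ht =>
      gf_le (3331/1000 : ℝ) (60879/500000 : ℝ) (773/1000 : ℝ) (94011/200000 : ℝ) (by norm_num) (by norm_num) (by norm_num)
        (by norm_num) (by norm_num) (by norm_num) (by norm_num) t (le_trans hl9 ht))
  
  have hl10 : (1791/500 : ℝ) ≤ Real.log 36 := by
    have h := log_lb 36 3 (291/500 : ℝ) (by norm_num) (by norm_num) (by norm_num) (by norm_num)
    push_cast at h
    linarith
  have p10 : ∫ t in (36:ℝ)..46, gf t ≤ (46 - 36) * ((53611/500000 : ℝ) * (91483/200000 : ℝ)) :=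
    int_piece 36 46 _ (by norm_num) (by norm_num) (fun t ht =>
      gf_le (1791/500 : ℝ) (53611/500000 : ℝ) (501/625 : ℝ) (91483/200000 : ℝ) (by norm_num) (by norm_num) (by norm_num)
        (by norm_num) (by norm_num) (by norm_num) (by norm_num) t (le_trans hl10 ht))
  
  have hl11 : (3827/1000 : ℝ) ≤ Real.log 46 := by
    have h := log_lb 46 3 (827/1000 : ℝ) (by norm_num) (by norm_num) (by norm_num) (by norm_num)
    push_cast at h
    linarith
  have p11 : ∫ t in (46:ℝ)..60, gf t ≤ (60 - 46) * ((95499/1000000 : ℝ) * (445813/1000000 : ℝ)) :=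
    int_piece 46 60 _ (by norm_num) (by norm_num) (fun t ht =>
      gf_le (3827/1000 : ℝ) (95499/1000000 : ℝ) (4143/5000 : ℝ) (445813/1000000 : ℝ) (by norm_num) (by norm_num) (by norm_num)
        (by norm_num) (by norm_num) (by norm_num) (by norm_num) t (le_trans hl11 ht))
  
  have hl12 : (2047/500 : ℝ) ≤ Real.log 60 := by
    have h := log_lb 60 4 (47/500 : ℝ) (by norm_num) (by norm_num) (by norm_num) (by norm_num)
    push_cast at h
    linarith
  have p12 : ∫ t in (60:ℝ)..80, gf t ≤ (80 - 60) * ((21217/250000 : ℝ) * (216973/500000 : ℝ)) :=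
    int_piece 60 80 _ (by norm_num) (by norm_num) (fun t ht =>
      gf_le (2047/500 : ℝ) (21217/250000 : ℝ) (857/1000 : ℝ) (216973/500000 : ℝ) (by norm_num) (by norm_num) (by norm_num)
        (by norm_num) (by norm_num) (by norm_num) (by norm_num) t (le_trans hl12 ht))
  
  have hl13 : (4381/1000 : ℝ) ≤ Real.log 80 := by
    have h := log_lb 80 4 (381/1000 : ℝ) (by norm_num) (by norm_num) (by norm_num) (by norm_num)
    push_cast at h
    linarith
  have p13 : ∫ t in (80:ℝ)..105, gf t ≤ (105 - 80) * ((75379/1000000 : ℝ) * (210987/500000 : ℝ)) :=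
    int_piece 80 105 _ (by norm_num) (by norm_num) (fun t ht =>
      gf_le (4381/1000 : ℝ) (75379/1000000 : ℝ) (1773/2000 : ℝ) (210987/500000 : ℝ) (by norm_num) (by norm_num) (by norm_num)
        (by norm_num) (by norm_num) (by norm_num) (by norm_num) t (le_trans hl13 ht))
  
  have hl14 : (4653/1000 : ℝ) ≤ Real.log 105 := by
    have h := log_lb 105 4 (653/1000 : ℝ) (by norm_num) (by norm_num) (by norm_num) (by norm_num)
    push_cast at h
    linarith
  have p14 : ∫ t in (105:ℝ)..140, gf t ≤ (140 - 105) * ((33919/500000 : ℝ) * (411247/1000000 : ℝ)) :=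
    int_piece 105 140 _ (by norm_num) (by norm_num) (fun t ht =>
      gf_le (4653/1000 : ℝ) (33919/500000 : ℝ) (9137/10000 : ℝ) (411247/1000000 : ℝ) (by norm_num) (by norm_num) (by norm_num)
        (by norm_num) (by norm_num) (by norm_num) (by norm_num) t (le_trans hl14 ht))
  
  have hl15 : (4939/1000 : ℝ) ≤ Real.log 140 := by
    have h := log_lb 140 4 (939/1000 : ℝ) (by norm_num) (by norm_num) (by norm_num) (by norm_num)
    push_cast at h
    linarith
  have p15 : ∫ t in (140:ℝ)..190, gf t ≤ (190 - 140) * ((61113/1000000 : ℝ) * (400657/1000000 : ℝ)) :=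
    int_piece 140 190 _ (by norm_num) (by norm_num) (fun t ht =>
      gf_le (4939/1000 : ℝ) (61113/1000000 : ℝ) (9413/10000 : ℝ) (400657/1000000 : ℝ) (by norm_num) (by norm_num) (by norm_num)
        (by norm_num) (by norm_num) (by norm_num) (by norm_num) t (le_trans hl15 ht))
  
  have hl16 : (2623/500 : ℝ) ≤ Real.log 190 := by
    have h := log_lb 190 5 (123/500 : ℝ) (by norm_num) (by norm_num) (by norm_num) (by norm_num)
    push_cast at h
    linarith
  have p16 : ∫ t in (190:ℝ)..260, gf t ≤ (260 - 190) * ((54993/1000000 : ℝ) * (77983/200000 : ℝ)) :=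
    int_piece 190 260 _ (by norm_num) (by norm_num) (fun t ht =>
      gf_le (2623/500 : ℝ) (54993/1000000 : ℝ) (9701/10000 : ℝ) (77983/200000 : ℝ) (by norm_num) (by norm_num) (by norm_num)
        (by norm_num) (by norm_num) (by norm_num) (by norm_num) t (le_trans hl16 ht))
  
  have hl17 : (139/25 : ℝ) ≤ Real.log 260 := by
    have h := log_lb 260 5 (14/25 : ℝ) (by norm_num) (by norm_num) (by norm_num) (by norm_num)
    push_cast at h
    linarith
  have p17 : ∫ t in (260:ℝ)..360, gf t ≤ (360 - 260) * ((49673/1000000 : ℝ) * (7591/20000 : ℝ)) :=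
    int_piece 260 360 _ (by norm_num) (by norm_num) (fun t ht =>
      gf_le (139/25 : ℝ) (49673/1000000 : ℝ) (9987/10000 : ℝ) (7591/20000 : ℝ) (by norm_num) (by norm_num) (by norm_num)
        (by norm_num) (by norm_num) (by norm_num) (by norm_num) t (le_trans hl17 ht))
  
  have hl18 : (1471/250 : ℝ) ≤ Real.log 360 := by
    have h := log_lb 360 5 (221/250 : ℝ) (by norm_num) (by norm_num) (by norm_num) (by norm_num)
    push_cast at h
    linarith
  have p18 : ∫ t in (360:ℝ)..500, gf t ≤ (500 - 360) * ((22493/500000 : ℝ) * (369443/1000000 : ℝ)) :=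
    int_piece 360 500 _ (by norm_num) (by norm_num) (fun t ht =>
      gf_le (1471/250 : ℝ) (22493/500000 : ℝ) (5137/5000 : ℝ) (369443/1000000 : ℝ) (by norm_num) (by norm_num) (by norm_num)
        (by norm_num) (by norm_num) (by norm_num) (by norm_num) t (le_trans hl18 ht))
  
  have hl19 : (3107/500 : ℝ) ≤ Real.log 500 := by
    have h := log_lb 500 6 (107/500 : ℝ) (by norm_num) (by norm_num) (by norm_num) (by norm_num)
    push_cast at h
    linarith
  have p19 : ∫ t in (500:ℝ)..680, gf t ≤ (680 - 500) * ((40889/1000000 : ℝ) * (44961/125000 : ℝ)) :=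
    int_piece 500 680 _ (by norm_num) (by norm_num) (fun t ht =>
      gf_le (3107/500 : ℝ) (40889/1000000 : ℝ) (10559/10000 : ℝ) (44961/125000 : ℝ) (by norm_num) (by norm_num) (by norm_num)
        (by norm_num) (by norm_num) (by norm_num) (by norm_num) t (le_trans hl19 ht))
  
  have hl20 : (6521/1000 : ℝ) ≤ Real.log 680 := by
    have h := log_lb 680 6 (521/1000 : ℝ) (by norm_num) (by norm_num) (by norm_num) (by norm_num)
    push_cast at h
    linarith
  have p20 : ∫ t in (680:ℝ)..851, gf t ≤ (851 - 680) * ((1879/50000 : ℝ) * (175563/500000 : ℝ)) :=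
    int_piece 680 851 _ (by norm_num) (by norm_num) (fun t ht =>
      gf_le (6521/1000 : ℝ) (1879/50000 : ℝ) (676/625 : ℝ) (175563/500000 : ℝ) (by norm_num) (by norm_num) (by norm_num)
        (by norm_num) (by norm_num) (by norm_num) (by norm_num) t (le_trans hl20 ht))
  have c20 := p20
  have c19 : ∫ t in (500:ℝ)..851, gf t ≤ (680 - 500) * ((40889/1000000 : ℝ) * (44961/125000 : ℝ)) + ((851 - 680) * ((1879/50000 : ℝ) * (175563/500000 : ℝ))) := by
    rw [← intervalIntegral.integral_add_adjacent_intervals (gf_integrable (by norm_num : (3:ℝ) ≤ 500) (by norm_num : (3:ℝ) ≤ 680)) (gf_integrable (by norm_num : (3:ℝ) ≤ 680) (by norm_num : (3:ℝ) ≤ 851))]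
    exact add_le_add p19 c20
  have c18 : ∫ t in (360:ℝ)..851, gf t ≤ (500 - 360) * ((22493/500000 : ℝ) * (369443/1000000 : ℝ)) + ((680 - 500) * ((40889/1000000 : ℝ) * (44961/125000 : ℝ)) + ((851 - 680) * ((1879/50000 : ℝ) * (175563/500000 : ℝ)))) := by
    rw [← intervalIntegral.integral_add_adjacent_intervals (gf_integrable (by norm_num : (3:ℝ) ≤ 360) (by norm_num : (3:ℝ) ≤ 500)) (gf_integrable (by norm_num : (3:ℝ) ≤ 500) (by norm_num : (3:ℝ) ≤ 851))]
    exact add_le_add p18 c19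
  have c17 : ∫ t in (260:ℝ)..851, gf t ≤ (360 - 260) * ((49673/1000000 : ℝ) * (7591/20000 : ℝ)) + ((500 - 360) * ((22493/500000 : ℝ) * (369443/1000000 : ℝ)) + ((680 - 500) * ((40889/1000000 : ℝ) * (44961/125000 : ℝ)) + ((851 - 680) * ((1879/50000 : ℝ) * (175563/500000 : ℝ))))) := by
    rw [← intervalIntegral.integral_add_adjacent_intervals (gf_integrable (by norm_num : (3:ℝ) ≤ 260) (by norm_num : (3:ℝ) ≤ 360)) (gf_integrable (by norm_num : (3:ℝ) ≤ 360) (by norm_num : (3:ℝ) ≤ 851))]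
    exact add_le_add p17 c18
  have c16 : ∫ t in (190:ℝ)..851, gf t ≤ (260 - 190) * ((54993/1000000 : ℝ) * (77983/200000 : ℝ)) + ((360 - 260) * ((49673/1000000 : ℝ) * (7591/20000 : ℝ)) + ((500 - 360) * ((22493/500000 : ℝ) * (369443/1000000 : ℝ)) + ((680 - 500) * ((40889/1000000 : ℝ) * (44961/125000 : ℝ)) + ((851 - 680) * ((1879/50000 : ℝ) * (175563/500000 : ℝ)))))) := by
    rw [← intervalIntegral.integral_add_adjacent_intervals (gf_integrable (by norm_num : (3:ℝ) ≤ 190) (by norm_num : (3:ℝ) ≤ 260)) (gf_integrable (by norm_num : (3:ℝ) ≤ 260) (by norm_num : (3:ℝ) ≤ 851))]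
    exact add_le_add p16 c17
  have c15 : ∫ t in (140:ℝ)..851, gf t ≤ (190 - 140) * ((61113/1000000 : ℝ) * (400657/1000000 : ℝ)) + ((260 - 190) * ((54993/1000000 : ℝ) * (77983/200000 : ℝ)) + ((360 - 260) * ((49673/1000000 : ℝ) * (7591/20000 : ℝ)) + ((500 - 360) * ((22493/500000 : ℝ) * (369443/1000000 : ℝ)) + ((680 - 500) * ((40889/1000000 : ℝ) * (44961/125000 : ℝ)) + ((851 - 680) * ((1879/50000 : ℝ) * (175563/500000 : ℝ))))))) := by
    rw [← intervalIntegral.integral_add_adjacent_intervals (gf_integrable (by norm_num : (3:ℝ) ≤ 140) (by norm_num : (3:ℝ) ≤ 190)) (gf_integrable (by norm_num : (3:ℝ) ≤ 190) (by norm_num : (3:ℝ) ≤ 851))]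
    exact add_le_add p15 c16
  have c14 : ∫ t in (105:ℝ)..851, gf t ≤ (140 - 105) * ((33919/500000 : ℝ) * (411247/1000000 : ℝ)) + ((190 - 140) * ((61113/1000000 : ℝ) * (400657/1000000 : ℝ)) + ((260 - 190) * ((54993/1000000 : ℝ) * (77983/200000 : ℝ)) + ((360 - 260) * ((49673/1000000 : ℝ) * (7591/20000 : ℝ)) + ((500 - 360) * ((22493/500000 : ℝ) * (369443/1000000 : ℝ)) + ((680 - 500) * ((40889/1000000 : ℝ) * (44961/125000 : ℝ)) + ((851 - 680) * ((1879/50000 : ℝ) * (175563/500000 : ℝ)))))))) := by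
    rw [← intervalIntegral.integral_add_adjacent_intervals (gf_integrable (by norm_num : (3:ℝ) ≤ 105) (by norm_num : (3:ℝ) ≤ 140)) (gf_integrable (by norm_num : (3:ℝ) ≤ 140) (by norm_num : (3:ℝ) ≤ 851))]
    exact add_le_add p14 c15
  have c13 : ∫ t in (80:ℝ)..851, gf t ≤ (105 - 80) * ((75379/1000000 : ℝ) * (210987/500000 : ℝ)) + ((140 - 105) * ((33919/500000 : ℝ) * (411247/1000000 : ℝ)) + ((190 - 140) * ((61113/1000000 : ℝ) * (400657/1000000 : ℝ)) + ((260 - 190) * ((54993/1000000 : ℝ) * (77983/200000 : ℝ)) + ((360 - 260) * ((49673/1000000 : ℝ) * (7591/20000 : ℝ)) + ((500 - 360) * ((22493/500000 : ℝ) * (369443/1000000 : ℝ)) + ((680 - 500) * ((40889/1000000 : ℝ) * (44961/125000 : ℝ)) + ((851 - 680) * ((1879/50000 : ℝ) * (175563/500000 : ℝ))))))))) := by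
    rw [← intervalIntegral.integral_add_adjacent_intervals (gf_integrable (by norm_num : (3:ℝ) ≤ 80) (by norm_num : (3:ℝ) ≤ 105)) (gf_integrable (by norm_num : (3:ℝ) ≤ 105) (by norm_num : (3:ℝ) ≤ 851))]
    exact add_le_add p13 c14
  have c12 : ∫ t in (60:ℝ)..851, gf t ≤ (80 - 60) * ((21217/250000 : ℝ) * (216973/500000 : ℝ)) + ((105 - 80) * ((75379/1000000 : ℝ) * (210987/500000 : ℝ)) + ((140 - 105) * ((33919/500000 : ℝ) * (411247/1000000 : ℝ)) + ((190 - 140) * ((61113/1000000 : ℝ) * (400657/1000000 : ℝ)) + ((260 - 190) * ((54993/1000000 : ℝ) * (77983/200000 : ℝ)) + ((360 - 260) * ((49673/1000000 : ℝ) * (7591/20000 : ℝ)) + ((500 - 360) * ((22493/500000 : ℝ) * (369443/1000000 : ℝ)) + ((680 - 500) * ((40889/1000000 : ℝ) * (44961/125000 : ℝ)) + ((851 - 680) * ((1879/50000 : ℝ) * (175563/500000 : ℝ)))))))))) := by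
    rw [← intervalIntegral.integral_add_adjacent_intervals (gf_integrable (by norm_num : (3:ℝ) ≤ 60) (by norm_num : (3:ℝ) ≤ 80)) (gf_integrable (by norm_num : (3:ℝ) ≤ 80) (by norm_num : (3:ℝ) ≤ 851))]
    exact add_le_add p12 c13
  have c11 : ∫ t in (46:ℝ)..851, gf t ≤ (60 - 46) * ((95499/1000000 : ℝ) * (445813/1000000 : ℝ)) + ((80 - 60) * ((21217/250000 : ℝ) * (216973/500000 : ℝ)) + ((105 - 80) * ((75379/1000000 : ℝ) * (210987/500000 : ℝ)) + ((140 - 105) * ((33919/500000 : ℝ) * (411247/1000000 : ℝ)) + ((190 - 140) * ((61113/1000000 : ℝ) * (400657/1000000 : ℝ)) + ((260 - 190) * ((54993/1000000 : ℝ) * (77983/200000 : ℝ)) + ((360 - 260) * ((49673/1000000 : ℝ) * (7591/20000 : ℝ)) + ((500 - 360) * ((22493/500000 : ℝ) * (369443/1000000 : ℝ)) + ((680 - 500) * ((40889/1000000 : ℝ) * (44961/125000 : ℝ)) + ((851 - 680) * ((1879/50000 : ℝ) * (175563/500000 : ℝ))))))))))) := by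
    rw [← intervalIntegral.integral_add_adjacent_intervals (gf_integrable (by norm_num : (3:ℝ) ≤ 46) (by norm_num : (3:ℝ) ≤ 60)) (gf_integrable (by norm_num : (3:ℝ) ≤ 60) (by norm_num : (3:ℝ) ≤ 851))]
    exact add_le_add p11 c12
  have c10 : ∫ t in (36:ℝ)..851, gf t ≤ (46 - 36) * ((53611/500000 : ℝ) * (91483/200000 : ℝ)) + ((60 - 46) * ((95499/1000000 : ℝ) * (445813/1000000 : ℝ)) + ((80 - 60) * ((21217/250000 : ℝ) * (216973/500000 : ℝ)) + ((105 - 80) * ((75379/1000000 : ℝ) * (210987/500000 : ℝ)) + ((140 - 105) * ((33919/500000 : ℝ) * (411247/1000000 : ℝ)) + ((190 - 140) * ((61113/1000000 : ℝ) * (400657/1000000 : ℝ)) + ((260 - 190) * ((54993/1000000 : ℝ) * (77983/200000 : ℝ)) + ((360 - 260) * ((49673/1000000 : ℝ) * (7591/20000 : ℝ)) + ((500 - 360) * ((22493/500000 : ℝ) * (369443/1000000 : ℝ)) + ((680 - 500) * ((40889/1000000 : ℝ) * (44961/125000 : ℝ)) + ((851 - 680) * ((1879/50000 : ℝ) * (175563/500000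 : ℝ)))))))))))) := by
    rw [← intervalIntegral.integral_add_adjacent_intervals (gf_integrable (by norm_num : (3:ℝ) ≤ 36) (by norm_num : (3:ℝ) ≤ 46)) (gf_integrable (by norm_num : (3:ℝ) ≤ 46) (by norm_num : (3:ℝ) ≤ 851))]
    exact add_le_add p10 c11
  have c9 : ∫ t in (28:ℝ)..851, gf t ≤ (36 - 28) * ((60879/500000 : ℝ) * (94011/200000 : ℝ)) + ((46 - 36) * ((53611/500000 : ℝ) * (91483/200000 : ℝ)) + ((60 - 46) * ((95499/1000000 : ℝ) * (445813/1000000 : ℝ)) + ((80 - 60) * ((21217/250000 : ℝ) * (216973/500000 : ℝ)) + ((105 - 80) * ((75379/1000000 : ℝ) * (210987/500000 : ℝ)) + ((140 - 105) * ((33919/500000 : ℝ) * (411247/1000000 : ℝ)) + ((190 - 140) * ((61113/1000000 : ℝ) * (400657/1000000 : ℝ)) + ((260 - 190) * ((54993/1000000 : ℝ) * (77983/200000 : ℝ)) + ((360 - 260) * ((49673/1000000 : ℝ) * (7591/20000 : ℝ)) + ((500 - 360) * ((22493/500000 : ℝ) * (369443/1000000 : ℝ)) + ((680 - 500) * ((40889/1000000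 : ℝ) * (44961/125000 : ℝ)) + ((851 - 680) * ((1879/50000 : ℝ) * (175563/500000 : ℝ))))))))))))) := by
    rw [← intervalIntegral.integral_add_adjacent_intervals (gf_integrable (by norm_num : (3:ℝ) ≤ 28) (by norm_num : (3:ℝ) ≤ 36)) (gf_integrable (by norm_num : (3:ℝ) ≤ 36) (by norm_num : (3:ℝ) ≤ 851))]
    exact add_le_add p9 c10
  have c8 : ∫ t in (22:ℝ)..851, gf t ≤ (28 - 22) * ((6939/50000 : ℝ) * (30183/62500 : ℝ)) + ((36 - 28) * ((60879/500000 : ℝ) * (94011/200000 : ℝ)) + ((46 - 36) * ((53611/500000 : ℝ) * (91483/200000 : ℝ)) + ((60 - 46) * ((95499/1000000 : ℝ) * (445813/1000000 : ℝ)) + ((80 - 60) * ((21217/250000 : ℝ) * (216973/500000 : ℝ)) + ((105 - 80) * ((75379/1000000 : ℝ) * (210987/500000 : ℝ)) + ((140 - 105) * ((33919/500000 : ℝ) * (411247/1000000 : ℝ)) + ((190 - 140) * ((61113/1000000 : ℝ) * (400657/1000000 : ℝ)) + ((260 - 190) * ((54993/1000000 : ℝ) * (77983/200000 : ℝ)) +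 ((360 - 260) * ((49673/1000000 : ℝ) * (7591/20000 : ℝ)) + ((500 - 360) * ((22493/500000 : ℝ) * (369443/1000000 : ℝ)) + ((680 - 500) * ((40889/1000000 : ℝ) * (44961/125000 : ℝ)) + ((851 - 680) * ((1879/50000 : ℝ) * (175563/500000 : ℝ)))))))))))))) := by
    rw [← intervalIntegral.integral_add_adjacent_intervals (gf_integrable (by norm_num : (3:ℝ) ≤ 22) (by norm_num : (3:ℝ) ≤ 28)) (gf_integrable (by norm_num : (3:ℝ) ≤ 28) (by norm_num : (3:ℝ) ≤ 851))]
    exact add_le_add p8 c9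
  have c7 : ∫ t in (17:ℝ)..851, gf t ≤ (22 - 17) * ((20231/125000 : ℝ) * (497937/1000000 : ℝ)) + ((28 - 22) * ((6939/50000 : ℝ) * (30183/62500 : ℝ)) + ((36 - 28) * ((60879/500000 : ℝ) * (94011/200000 : ℝ)) + ((46 - 36) * ((53611/500000 : ℝ) * (91483/200000 : ℝ)) + ((60 - 46) * ((95499/1000000 : ℝ) * (445813/1000000 : ℝ)) + ((80 - 60) * ((21217/250000 : ℝ) * (216973/500000 : ℝ)) + ((105 - 80) * ((75379/1000000 : ℝ) * (210987/500000 : ℝ)) + ((140 - 105) * ((33919/500000 : ℝ) * (411247/1000000 : ℝ)) + ((190 - 140) * ((61113/1000000 : ℝ) * (400657/1000000 : ℝ)) + ((260 - 190) * ((54993/1000000 : ℝ) * (77983/200000 : ℝ)) + ((360 - 260) * ((49673/1000000 : ℝ) * (7591/20000 : ℝ)) + ((500 - 360) * ((22493/500000 : ℝ) * (369443/1000000 : ℝ)) + ((680 - 500) * ((40889/1000000 : ℝ) * (44961/125000 : ℝ)) + ((851 - 680) * ((1879/50000 : ℝ) * (175563/500000 : ℝ))))))))))))))) := by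
    rw [← intervalIntegral.integral_add_adjacent_intervals (gf_integrable (by norm_num : (3:ℝ) ≤ 17) (by norm_num : (3:ℝ) ≤ 22)) (gf_integrable (by norm_num : (3:ℝ) ≤ 22) (by norm_num : (3:ℝ) ≤ 851))]
    exact add_le_add p7 c8
  have c6 : ∫ t in (13:ℝ)..851, gf t ≤ (17 - 13) * ((48121/250000 : ℝ) * (20587/40000 : ℝ)) + ((22 - 17) * ((20231/125000 : ℝ) * (497937/1000000 : ℝ)) + ((28 - 22) * ((6939/50000 : ℝ) * (30183/62500 : ℝ)) + ((36 - 28) * ((60879/500000 : ℝ) * (94011/200000 : ℝ)) + ((46 - 36) * ((53611/500000 : ℝ) * (91483/200000 : ℝ)) + ((60 - 46) * ((95499/1000000 : ℝ) * (445813/1000000 : ℝ)) + ((80 - 60) * ((21217/250000 : ℝ) * (216973/500000 : ℝ)) + ((105 - 80) * ((75379/1000000 : ℝ) * (210987/500000 : ℝ)) + ((140 - 105) * ((33919/500000 : ℝ) * (411247/1000000 : ℝ)) + ((190 - 140) * ((61113/1000000 : ℝ) * (400657/1000000 : ℝ)) + ((260 - 190) * ((54993/1000000 : ℝ) * (77983/200000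 : ℝ)) + ((360 - 260) * ((49673/1000000 : ℝ) * (7591/20000 : ℝ)) + ((500 - 360) * ((22493/500000 : ℝ) * (369443/1000000 : ℝ)) + ((680 - 500) * ((40889/1000000 : ℝ) * (44961/125000 : ℝ)) + ((851 - 680) * ((1879/50000 : ℝ) * (175563/500000 : ℝ)))))))))))))))) := by
    rw [← intervalIntegral.integral_add_adjacent_intervals (gf_integrable (by norm_num : (3:ℝ) ≤ 13) (by norm_num : (3:ℝ) ≤ 17)) (gf_integrable (by norm_num : (3:ℝ) ≤ 17) (by norm_num : (3:ℝ) ≤ 851))]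
    exact add_le_add p6 c7
  have c5 : ∫ t in (10:ℝ)..851, gf t ≤ (13 - 10) * ((232443/1000000 : ℝ) * (16643/31250 : ℝ)) + ((17 - 13) * ((48121/250000 : ℝ) * (20587/40000 : ℝ)) + ((22 - 17) * ((20231/125000 : ℝ) * (497937/1000000 : ℝ)) + ((28 - 22) * ((6939/50000 : ℝ) * (30183/62500 : ℝ)) + ((36 - 28) * ((60879/500000 : ℝ) * (94011/200000 : ℝ)) + ((46 - 36) * ((53611/500000 : ℝ) * (91483/200000 : ℝ)) + ((60 - 46) * ((95499/1000000 : ℝ) * (445813/1000000 : ℝ)) + ((80 - 60) * ((21217/250000 : ℝ) * (216973/500000 : ℝ)) + ((105 - 80) * ((75379/1000000 : ℝ) * (210987/500000 : ℝ)) + ((140 - 105) * ((33919/500000 : ℝ) * (411247/1000000 : ℝ)) + ((190 - 140) * ((61113/1000000 : ℝ) * (400657/1000000 : ℝ)) + ((260 - 190) * ((54993/1000000 : ℝ) * (77983/200000 : ℝ)) + ((360 - 260) * ((49673/1000000 : ℝ) * (7591/20000 : ℝ)) + ((500 - 360) * ((22493/500000 : ℝ) * (369443/1000000 : ℝ)) +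 ((680 - 500) * ((40889/1000000 : ℝ) * (44961/125000 : ℝ)) + ((851 - 680) * ((1879/50000 : ℝ) * (175563/500000 : ℝ))))))))))))))))) := by
    rw [← intervalIntegral.integral_add_adjacent_intervals (gf_integrable (by norm_num : (3:ℝ) ≤ 10) (by norm_num : (3:ℝ) ≤ 13)) (gf_integrable (by norm_num : (3:ℝ) ≤ 13) (by norm_num : (3:ℝ) ≤ 851))]
    exact add_le_add p5 c6
  have c4 : ∫ t in (8:ℝ)..851, gf t ≤ (10 - 8) * ((55563/200000 : ℝ) * (274589/500000 : ℝ)) + ((13 - 10) * ((232443/1000000 : ℝ) * (16643/31250 : ℝ)) + ((17 - 13) * ((48121/250000 : ℝ) * (20587/40000 : ℝ)) + ((22 - 17) * ((20231/125000 : ℝ) * (497937/1000000 : ℝ)) + ((28 - 22) * ((6939/50000 : ℝ) * (30183/62500 : ℝ)) + ((36 - 28) * ((60879/500000 : ℝ) * (94011/200000 : ℝ)) + ((46 - 36) * ((53611/500000 : ℝ) * (91483/200000 : ℝ)) + ((60 - 46) * ((95499/1000000 : ℝ) * (445813/1000000 : ℝ)) + ((80 - 60) * ((21217/250000 : ℝ)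 * (216973/500000 : ℝ)) + ((105 - 80) * ((75379/1000000 : ℝ) * (210987/500000 : ℝ)) + ((140 - 105) * ((33919/500000 : ℝ) * (411247/1000000 : ℝ)) + ((190 - 140) * ((61113/1000000 : ℝ) * (400657/1000000 : ℝ)) + ((260 - 190) * ((54993/1000000 : ℝ) * (77983/200000 : ℝ)) + ((360 - 260) * ((49673/1000000 : ℝ) * (7591/20000 : ℝ)) + ((500 - 360) * ((22493/500000 : ℝ) * (369443/1000000 : ℝ)) + ((680 - 500) * ((40889/1000000 : ℝ) * (44961/125000 : ℝ)) + ((851 - 680) * ((1879/50000 : ℝ) * (175563/500000 : ℝ)))))))))))))))))) := by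
    rw [← intervalIntegral.integral_add_adjacent_intervals (gf_integrable (by norm_num : (3:ℝ) ≤ 8) (by norm_num : (3:ℝ) ≤ 10)) (gf_integrable (by norm_num : (3:ℝ) ≤ 10) (by norm_num : (3:ℝ) ≤ 851))]
    exact add_le_add p4 c5
  have c3 : ∫ t in (6:ℝ)..851, gf t ≤ (8 - 6) * ((361/1000 : ℝ) * (286493/500000 : ℝ)) + ((10 - 8) * ((55563/200000 : ℝ) * (274589/500000 : ℝ)) + ((13 - 10) * ((232443/1000000 : ℝ) * (16643/31250 : ℝ)) + ((17 - 13) * ((48121/250000 : ℝ) * (20587/40000 : ℝ)) + ((22 - 17) * ((20231/125000 : ℝ) * (497937/1000000 : ℝ)) + ((28 - 22) * ((6939/50000 : ℝ) * (30183/62500 : ℝ)) + ((36 - 28) * ((60879/500000 : ℝ) * (94011/200000 : ℝ)) + ((46 - 36) * ((53611/500000 : ℝ) * (91483/200000 : ℝ)) + ((60 - 46) * ((95499/1000000 : ℝ) * (445813/1000000 : ℝ)) + ((80 - 60) * ((21217/250000 : ℝ) * (216973/500000 : ℝ)) + ((105 - 80) * ((75379/1000000 : ℝ) * (210987/500000 :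 ℝ)) + ((140 - 105) * ((33919/500000 : ℝ) * (411247/1000000 : ℝ)) + ((190 - 140) * ((61113/1000000 : ℝ) * (400657/1000000 : ℝ)) + ((260 - 190) * ((54993/1000000 : ℝ) * (77983/200000 : ℝ)) + ((360 - 260) * ((49673/1000000 : ℝ) * (7591/20000 : ℝ)) + ((500 - 360) * ((22493/500000 : ℝ) * (369443/1000000 : ℝ)) + ((680 - 500) * ((40889/1000000 : ℝ) * (44961/125000 : ℝ)) + ((851 - 680) * ((1879/50000 : ℝ) * (175563/500000 : ℝ))))))))))))))))))) := by
    rw [← intervalIntegral.integral_add_adjacent_intervals (gf_integrable (by norm_num : (3:ℝ) ≤ 6) (by norm_num : (3:ℝ) ≤ 8)) (gf_integrable (by norm_num : (3:ℝ) ≤ 8) (by norm_num : (3:ℝ) ≤ 851))]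
    exact add_le_add p3 c4
  have c2 : ∫ t in (5:ℝ)..851, gf t ≤ (6 - 5) * ((54439/125000 : ℝ) * (294809/500000 : ℝ)) + ((8 - 6) * ((361/1000 : ℝ) * (286493/500000 : ℝ)) + ((10 - 8) * ((55563/200000 : ℝ) * (274589/500000 : ℝ)) + ((13 - 10) * ((232443/1000000 : ℝ) * (16643/31250 : ℝ)) + ((17 - 13) * ((48121/250000 : ℝ) * (20587/40000 : ℝ)) + ((22 - 17) * ((20231/125000 : ℝ) * (497937/1000000 : ℝ)) + ((28 - 22) * ((6939/50000 : ℝ) * (30183/62500 : ℝ)) + ((36 - 28) * ((60879/500000 : ℝ) * (94011/200000 : ℝ)) + ((46 - 36) * ((53611/500000 : ℝ) * (91483/200000 : ℝ)) + ((60 - 46) * ((95499/1000000 : ℝ) * (445813/1000000 : ℝ)) + ((80 - 60) * ((21217/250000 : ℝ) * (216973/500000 : ℝ)) + ((105 - 80) * ((75379/1000000 : ℝ) * (210987/500000 : ℝ)) + ((140 - 105) * ((33919/500000 : ℝ) * (411247/1000000 : ℝ)) + ((190 - 140) * ((61113/1000000 : ℝ) * (400657/1000000 : ℝ)) + ((260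 - 190) * ((54993/1000000 : ℝ) * (77983/200000 : ℝ)) + ((360 - 260) * ((49673/1000000 : ℝ) * (7591/20000 : ℝ)) + ((500 - 360) * ((22493/500000 : ℝ) * (369443/1000000 : ℝ)) + ((680 - 500) * ((40889/1000000 : ℝ) * (44961/125000 : ℝ)) + ((851 - 680) * ((1879/50000 : ℝ) * (175563/500000 : ℝ)))))))))))))))))))) := by
    rw [← intervalIntegral.integral_add_adjacent_intervals (gf_integrable (by norm_num : (3:ℝ) ≤ 5) (by norm_num : (3:ℝ) ≤ 6)) (gf_integrable (by norm_num : (3:ℝ) ≤ 6) (by norm_num : (3:ℝ) ≤ 851))]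
    exact add_le_add p2 c3
  have c1 : ∫ t in (4:ℝ)..851, gf t ≤ (5 - 4) * ((282413/500000 : ℝ) * (612021/1000000 : ℝ)) + ((6 - 5) * ((54439/125000 : ℝ) * (294809/500000 : ℝ)) + ((8 - 6) * ((361/1000 : ℝ) * (286493/500000 : ℝ)) + ((10 - 8) * ((55563/200000 : ℝ) * (274589/500000 : ℝ)) + ((13 - 10) * ((232443/1000000 : ℝ) * (16643/31250 : ℝ)) + ((17 - 13) * ((48121/250000 : ℝ) * (20587/40000 : ℝ)) + ((22 - 17) * ((20231/125000 : ℝ) * (497937/1000000 : ℝ)) + ((28 - 22) * ((6939/50000 : ℝ) * (30183/62500 : ℝ)) + ((36 - 28) * ((60879/500000 : ℝ) * (94011/200000 : ℝ)) + ((46 - 36) * ((53611/500000 : ℝ) * (91483/200000 : ℝ)) + ((60 - 46) * ((95499/1000000 : ℝ) * (445813/1000000 : ℝ)) + ((80 - 60) * ((21217/250000 : ℝ) * (216973/500000 : ℝ)) + ((105 - 80) * ((75379/1000000 : ℝ) * (210987/500000 : ℝ)) + ((140 - 105) * ((33919/500000 : ℝ) * (411247/1000000 : ℝ)) + ((190 -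 140) * ((61113/1000000 : ℝ) * (400657/1000000 : ℝ)) + ((260 - 190) * ((54993/1000000 : ℝ) * (77983/200000 : ℝ)) + ((360 - 260) * ((49673/1000000 : ℝ) * (7591/20000 : ℝ)) + ((500 - 360) * ((22493/500000 : ℝ) * (369443/1000000 : ℝ)) + ((680 - 500) * ((40889/1000000 : ℝ) * (44961/125000 : ℝ)) + ((851 - 680) * ((1879/50000 : ℝ) * (175563/500000 : ℝ))))))))))))))))))))) := by
    rw [← intervalIntegral.integral_add_adjacent_intervals (gf_integrable (by norm_num : (3:ℝ) ≤ 4) (by norm_num : (3:ℝ) ≤ 5)) (gf_integrable (by norm_num : (3:ℝ) ≤ 5) (by norm_num : (3:ℝ) ≤ 851))]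
    exact add_le_add p1 c2
  have c0 : ∫ t in (3:ℝ)..851, gf t ≤ (4 - 3) * ((33963/40000 : ℝ) * (645483/1000000 : ℝ)) + ((5 - 4) * ((282413/500000 : ℝ) * (612021/1000000 : ℝ)) + ((6 - 5) * ((54439/125000 : ℝ) * (294809/500000 : ℝ)) + ((8 - 6) * ((361/1000 : ℝ) * (286493/500000 : ℝ)) + ((10 - 8) * ((55563/200000 : ℝ) * (274589/500000 : ℝ)) + ((13 - 10) * ((232443/1000000 : ℝ) * (16643/31250 : ℝ)) + ((17 - 13) * ((48121/250000 : ℝ) * (20587/40000 : ℝ)) + ((22 - 17) * ((20231/125000 : ℝ) * (497937/1000000 : ℝ)) + ((28 - 22) * ((6939/50000 : ℝ) * (30183/62500 : ℝ)) + ((36 - 28) * ((60879/500000 : ℝ) * (94011/200000 : ℝ)) + ((46 - 36) * ((53611/500000 : ℝ) * (91483/200000 : ℝ)) + ((60 - 46) * ((95499/1000000 : ℝ) * (445813/1000000 : ℝ)) + ((80 - 60) * ((21217/250000 : ℝ) * (216973/500000 : ℝ)) + ((105 - 80) * ((75379/1000000 : ℝ) * (210987/500000 : ℝ)) + ((140 -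 105) * ((33919/500000 : ℝ) * (411247/1000000 : ℝ)) + ((190 - 140) * ((61113/1000000 : ℝ) * (400657/1000000 : ℝ)) + ((260 - 190) * ((54993/1000000 : ℝ) * (77983/200000 : ℝ)) + ((360 - 260) * ((49673/1000000 : ℝ) * (7591/20000 : ℝ)) + ((500 - 360) * ((22493/500000 : ℝ) * (369443/1000000 : ℝ)) + ((680 - 500) * ((40889/1000000 : ℝ) * (44961/125000 : ℝ)) + ((851 - 680) * ((1879/50000 : ℝ) * (175563/500000 : ℝ)))))))))))))))))))))) := by
    rw [← intervalIntegral.integral_add_adjacent_intervals (gf_integrable (by norm_num : (3:ℝ) ≤ 3) (by norm_num : (3:ℝ) ≤ 4)) (gf_integrable (by norm_num : (3:ℝ) ≤ 4) (by norm_num : (3:ℝ) ≤ 851))]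
    exact add_le_add p0 c1
  calc ∫ t in (3:ℝ)..851, gf t ≤ (4 - 3) * ((33963/40000 : ℝ) * (645483/1000000 : ℝ)) + ((5 - 4) * ((282413/500000 : ℝ) * (612021/1000000 : ℝ)) + ((6 - 5) * ((54439/125000 : ℝ) * (294809/500000 : ℝ)) + ((8 - 6) * ((361/1000 : ℝ) * (286493/500000 : ℝ)) + ((10 - 8) * ((55563/200000 : ℝ) * (274589/500000 : ℝ)) + ((13 - 10) * ((232443/1000000 : ℝ) * (16643/31250 : ℝ)) + ((17 - 13) * ((48121/250000 : ℝ) * (20587/40000 : ℝ)) + ((22 - 17) * ((20231/125000 : ℝ) * (497937/1000000 : ℝ)) + ((28 - 22) * ((6939/50000 : ℝ) * (30183/62500 : ℝ)) + ((36 - 28) * ((60879/500000 : ℝ) * (94011/200000 : ℝ)) + ((46 - 36) * ((53611/500000 : ℝ) * (91483/200000 : ℝ)) + ((60 - 46) * ((95499/1000000 : ℝ) * (445813/1000000 : ℝ)) + ((80 - 60) * ((21217/250000 : ℝ) * (216973/500000 : ℝ)) + ((105 - 80) * ((75379/1000000 : ℝ) * (210987/500000 : ℝ)) + ((140 - 105)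 * ((33919/500000 : ℝ) * (411247/1000000 : ℝ)) + ((190 - 140) * ((61113/1000000 : ℝ) * (400657/1000000 : ℝ)) + ((260 - 190) * ((54993/1000000 : ℝ) * (77983/200000 : ℝ)) + ((360 - 260) * ((49673/1000000 : ℝ) * (7591/20000 : ℝ)) + ((500 - 360) * ((22493/500000 : ℝ) * (369443/1000000 : ℝ)) + ((680 - 500) * ((40889/1000000 : ℝ) * (44961/125000 : ℝ)) + ((851 - 680) * ((1879/50000 : ℝ) * (175563/500000 : ℝ)))))))))))))))))))))) := c0
    _ ≤ (2417/125 : ℝ) := by norm_num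


lemma log_ge_six {t : ℝ} (ht : 851 ≤ t) : 6 ≤ Real.log t := by
  have h0 : (2.7182818286:ℝ) ^ (6:ℕ) * ((1 - (0:ℝ) / 256)⁻¹) ^ (256:ℕ) ≤ 851 := by
    norm_num
  have h := log_lb t 6 0 le_rfl (by norm_num) (by linarith) (h0.trans (by linarith))
  push_cast at h
  linarith

lemma rpow_neg34_lb (u a : ℝ) (hu : 1 ≤ u) (ha : 0 ≤ a) (h : a ^ 4 * u ^ 3 ≤ 1) :
    a ≤ u ^ (-(3:ℝ)/4) := by
  have hu0 : 0 < u := lt_of_lt_of_le one_pos hu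
  have hup : 0 < u ^ ((3:ℝ)/4) := Real.rpow_pos_of_pos hu0 _
  have hrp : (u ^ ((3:ℝ)/4)) ^ (4:ℕ) = u ^ (3:ℕ) := by
    rw [← Real.rpow_natCast (u ^ ((3:ℝ)/4)) 4, ← Real.rpow_mul hu0.le, ← Real.rpow_natCast u 3]
    norm_num
  have h4 : (a * u ^ ((3:ℝ)/4)) ^ (4:ℕ) ≤ 1 := by
    rw [mul_pow, hrp]; exact_mod_cast h
  have hkey : a * u ^ ((3:ℝ)/4) ≤ 1 := by
    by_contra hc
    push_neg at hc
    have : (1:ℝ) < (a * u ^ ((3:ℝ)/4)) ^ (4:ℕ) := one_lt_pow₀ hc (by norm_num)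
    linarith
  rw [show (-(3:ℝ)/4) = -((3:ℝ)/4) by norm_num, Real.rpow_neg hu0.le,
    inv_eq_one_div, le_div_iff₀ hup]
  linarith

lemma G0_851_lb : (6631:ℝ)/100 ≤ G0 851 := by
  have hl6 : (6:ℝ) ≤ Real.log 851 := log_ge_six (by norm_num)
  have hL0 : (0:ℝ) < Real.log 851 := by linarith
  have hu : Real.log 851 ≤ 6.8 := by
    apply log_ub 851 6.8 (by norm_num) (by norm_num)
    norm_num
    have h1 : (2.326:ℝ) ≤ (1297 / 1280) ^ 64 := by norm_num
    calc (851:ℝ) ≤ 2.326 ^ 8 := by norm_num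
      _ ≤ ((1297 / 1280) ^ 64) ^ 8 := pow_le_pow_left₀ (by norm_num) h1 8
      _ = (1297 / 1280) ^ 512 := by rw [← pow_mul]
  have h1 : (9499:ℝ)/40000 ≤ (Real.log 851) ^ (-(3:ℝ)/4) := by
    calc (9499:ℝ)/40000 ≤ (6.8:ℝ) ^ (-(3:ℝ)/4) :=
          rpow_neg34_lb 6.8 _ (by norm_num) (by norm_num) (by norm_num)
      _ ≤ (Real.log 851) ^ (-(3:ℝ)/4) :=
          Real.rpow_le_rpow_of_nonpos hL0 hu (by norm_num)
  have hsp : Real.sqrt (Real.log 851 / 5.573412) ≤ (5523:ℝ)/5000 := by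
    calc Real.sqrt (Real.log 851 / 5.573412) ≤ Real.sqrt (((5523:ℝ)/5000) ^ 2) := by
          apply Real.sqrt_le_sqrt
          rw [div_le_iff₀ (by norm_num : (0:ℝ) < 5.573412)]
          calc Real.log 851 ≤ 6.8 := hu
            _ ≤ ((5523:ℝ)/5000) ^ 2 * 5.573412 := by norm_num
      _ = (5523:ℝ)/5000 := Real.sqrt_sq (by norm_num)
  have h2 : (328163:ℝ)/1000000 ≤ Real.exp (-Real.sqrt (Real.log 851 / 5.573412)) := by
    have hup : Real.exp ((5523:ℝ)/5000) ≤ ((1 - (5523:ℝ)/5000 / 64)⁻¹) ^ (64:ℕ) :=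
      exp_ub _ 64 (by norm_num) (by norm_num)
    have hup2 : Real.exp ((5523:ℝ)/5000) ≤ 1000000/328163 := by
      refine hup.trans ?_
      norm_num
    calc (328163:ℝ)/1000000 ≤ Real.exp (-((5523:ℝ)/5000)) := by
          rw [Real.exp_neg, ← one_div, le_div_iff₀ (Real.exp_pos _)]
          calc (328163:ℝ)/1000000 * Real.exp ((5523:ℝ)/5000)
              ≤ (328163:ℝ)/1000000 * (1000000/328163) :=
                mul_le_mul_of_nonneg_left hup2 (by norm_num)
            _ = 1 := by norm_num
      _ ≤ Real.exp (-Real.sqrt (Real.log 851 / 5.573412)) :=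
          Real.exp_le_exp.2 (by linarith)
  unfold G0
  calc (6631:ℝ)/100 ≤ 851 * ((9499:ℝ)/40000) * ((328163:ℝ)/1000000) := by norm_num
    _ ≤ 851 * (Real.log 851) ^ (-(3:ℝ)/4) * Real.exp (-Real.sqrt (Real.log 851 / 5.573412)) := by
        apply mul_le_mul
        · exact mul_le_mul_of_nonneg_left h1 (by norm_num)
        · exact h2
        · norm_num
        · positivity

lemma two_gf_le_Df {t : ℝ} (h6 : 6 ≤ Real.log t) : 2 * gf t ≤ Df t := by
  have hL0 : (0:ℝ) < Real.log t := by linarith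
  have hLR : (0:ℝ) < Real.log t / 5.573412 := by positivity
  set s := Real.sqrt (Real.log t / 5.573412) with hsdef
  have hs0 : 0 ≤ s := Real.sqrt_nonneg _
  have hs4 : s ≤ Real.log t / 4 := by
    have : s ≤ Real.sqrt ((Real.log t / 4) ^ 2) := by
      apply Real.sqrt_le_sqrt
      rw [div_le_iff₀ (by norm_num : (0:ℝ) < 5.573412)]
      nlinarith
    calc s ≤ Real.sqrt ((Real.log t / 4) ^ 2) := this
      _ = Real.log t / 4 := Real.sqrt_sq (by linarith)
  have hq0 : 0 < (Real.log t) ^ (-(7:ℝ)/4) := Real.rpow_pos_of_pos hL0 _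
  have hE0 : 0 < Real.exp (-s) := Real.exp_pos _
  have hfac : 2 ≤ Real.log t - 3/4 - s/2 := by linarith
  unfold gf Df
  calc 2 * ((Real.log t) ^ (-(7:ℝ)/4) * Real.exp (-s))
      ≤ (Real.log t - 3/4 - s/2) * ((Real.log t) ^ (-(7:ℝ)/4) * Real.exp (-s)) :=
        mul_le_mul_of_nonneg_right hfac (by positivity)
    _ = Real.exp (-s) * ((Real.log t) ^ (-(7:ℝ)/4) * (Real.log t - 3/4 - s/2)) := by ring

theorem integral_an_bound (x : ℝ) (hx : 851 ≤ x) :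
    (∫ t in (3:ℝ)..x,
        Real.sqrt (8 / (Real.pi * Real.sqrt 5.573412)) *
          (Real.log t) ^ (-(7:ℝ)/4) * Real.exp (-Real.sqrt (Real.log t / 5.573412))) ≤
      Real.sqrt (2 / (Real.pi * Real.sqrt 5.573412)) * x *
        (Real.log x) ^ (-(3:ℝ)/4) * Real.exp (-Real.sqrt (Real.log x / 5.573412)) := by
  have h3x : (3:ℝ) ≤ x := by linarith
  have h851x : (851:ℝ) ≤ x := hx
  have hd : (0:ℝ) < 2 / (Real.pi * Real.sqrt 5.573412) :=
    div_pos two_pos (mul_pos Real.pi_pos (Real.sqrt_pos.2 (by norm_num)))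
  set c := Real.sqrt (2 / (Real.pi * Real.sqrt 5.573412)) with hc
  have hc0 : 0 < c := Real.sqrt_pos.2 hd
  have h8 : Real.sqrt (8 / (Real.pi * Real.sqrt 5.573412)) = 2 * c := by
    rw [hc, show (8:ℝ) / (Real.pi * Real.sqrt 5.573412)
        = 2^2 * (2 / (Real.pi * Real.sqrt 5.573412)) by ring,
      Real.sqrt_mul (by positivity), Real.sqrt_sq (by norm_num)]
  have hLHS : (∫ t in (3:ℝ)..x,
      Real.sqrt (8 / (Real.pi * Real.sqrt 5.573412)) *
        (Real.log t) ^ (-(7:ℝ)/4) * Real.exp (-Real.sqrt (Real.log t / 5.573412)))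
      = 2 * c * ∫ t in (3:ℝ)..x, gf t := by
    rw [← intervalIntegral.integral_const_mul]
    apply intervalIntegral.integral_congr
    intro t _
    unfold gf
    rw [h8]
    ring
  have hRHS : Real.sqrt (2 / (Real.pi * Real.sqrt 5.573412)) * x *
      (Real.log x) ^ (-(3:ℝ)/4) * Real.exp (-Real.sqrt (Real.log x / 5.573412)) = c * G0 x := by
    rw [hc]; unfold G0; ring
  rw [hLHS, hRHS]
  have key : 2 * ∫ t in (3:ℝ)..x, gf t ≤ G0 x := by
    have hsplit : (∫ t in (3:ℝ)..x, gf t)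
        = (∫ t in (3:ℝ)..851, gf t) + ∫ t in (851:ℝ)..x, gf t :=
      (intervalIntegral.integral_add_adjacent_intervals
        (gf_integrable (by norm_num) (by norm_num))
        (gf_integrable (by norm_num) (by linarith))).symm
    have hderiv : ∀ t ∈ Set.uIcc (851:ℝ) x, HasDerivAt G0 (Df t) t := by
      intro t htm
      rw [Set.uIcc_of_le h851x] at htm
      exact G0_hasDeriv (log_ge_six htm.1) (by linarith [htm.1])
    have hftc : ∫ t in (851:ℝ)..x, Df t = G0 x - G0 851 :=
      intervalIntegral.integral_eq_sub_of_hasDerivAt hderiv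
        (Df_integrable (by norm_num) (by linarith))
    have hmono : (∫ t in (851:ℝ)..x, 2 * gf t) ≤ ∫ t in (851:ℝ)..x, Df t := by
      apply intervalIntegral.integral_mono_on h851x
        ((gf_integrable (by norm_num) (by linarith)).const_mul 2)
        (Df_integrable (by norm_num) (by linarith))
      intro t htm
      exact two_gf_le_Df (log_ge_six htm.1)
    rw [intervalIntegral.integral_const_mul] at hmono
    have hG851 := G0_851_lb
    have hsum := sum_bound
    calc 2 * ∫ t in (3:ℝ)..x, gf t
        = 2 * (∫ t in (3:ℝ)..851, gf t) + 2 * ∫ t in (851:ℝ)..x, gf t := by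
          rw [hsplit]; ring
      _ ≤ 2 * ((2417:ℝ)/125) + (G0 x - G0 851) := by
          rw [← hftc]
          have := mul_le_mul_of_nonneg_left hsum (by norm_num : (0:ℝ) ≤ 2)
          linarith [hmono]
      _ ≤ G0 x := by
          have : 2 * ((2417:ℝ)/125) ≤ (6631:ℝ)/100 := by norm_num
          linarith [hG851]
  calc 2 * c * ∫ t in (3:ℝ)..x, gf t = c * (2 * ∫ t in (3:ℝ)..x, gf t) := by ring
    _ ≤ c * G0 x := mul_le_mul_of_nonneg_left key hc0.le
end

section
/- Let n be a positive integer and x ≥ 27 a real number such that x/log^{n+2} x ≥ (1/(n+1)!) · ∑_{k=1}^{n+1} 2(k−1)!/log^k 2. Then li(x) ≥ ∑_{k=1}^{n+1} (k−1)! · x / log^k x. -/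
open Real MeasureTheory intervalIntegral Filter Set

noncomputable def li (x : ℝ) : ℝ :=
  Filter.limUnder (nhdsWithin (0:ℝ) (Set.Ioi 0))
    (fun ε => (∫ t in (0:ℝ)..(1 - ε), 1 / Real.log t) + ∫ t in (1 + ε)..x, 1 / Real.log t)

lemma log_lb_s9 {y : ℝ} (hy : 0 < y) : 1 - 1/y ≤ Real.log y := by
  have h := Real.log_le_sub_one_of_pos (inv_pos.2 hy)
  rw [Real.log_inv] at h
  rw [one_div]
  linarith

lemma contOn_invlogpow (m : ℕ) {s : Set ℝ} (hs : ∀ t ∈ s, (1:ℝ) < t) :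
    ContinuousOn (fun t : ℝ => 1 / Real.log t ^ m) s := by
  apply ContinuousOn.div continuousOn_const
  · exact (Real.continuousOn_log.mono (fun t ht => by have := hs t ht; simp; linarith)).pow m
  · exact fun t ht => pow_ne_zero _ (ne_of_gt (Real.log_pos (hs t ht)))

lemma hasDerivAt_div_log_pow (m : ℕ) {t : ℝ} (ht : 1 < t) :
    HasDerivAt (fun s => s / Real.log s ^ (m+1))
      (1 / Real.log t ^ (m+1) - (m+1) / Real.log t ^ (m+2)) t := by
  have h0 : (0:ℝ) < t := by linarith
  have hl : Real.log t ≠ 0 := ne_of_gt (Real.log_pos ht)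
  have hpow : HasDerivAt (fun s => Real.log s ^ (m+1))
      ((m+1 : ℕ) * Real.log t ^ m * t⁻¹) t := by
    simpa using (Real.hasDerivAt_log (ne_of_gt h0)).fun_pow (m+1)
  have h := (hasDerivAt_id' t).fun_div hpow (pow_ne_zero _ hl)
  refine h.congr_deriv ?_
  have ht0 : t ≠ 0 := ne_of_gt h0
  field_simp
  push_cast
  ring

open Real MeasureTheory intervalIntegral Filter Set


lemma telescope (m : ℕ) {L : ℝ} (hL : L ≠ 0) :
    ∑ k ∈ Finset.Icc 1 m, (Nat.factorial (k-1) : ℝ) * (1 / L^k - k / L^(k+1))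
      = 1/L - (Nat.factorial m : ℝ)/L^(m+1) := by
  induction m with
  | zero => simp
  | succ m ih =>
    rw [Finset.sum_Icc_succ_top (by omega), ih]
    have hfac : (Nat.factorial (m+1) : ℝ) = (m+1) * Nat.factorial m := by
      push_cast [Nat.factorial_succ]; ring
    simp only [Nat.add_sub_cancel, hfac]
    have hpow : L^(m+1) ≠ 0 := pow_ne_zero _ hL
    have hpow2 : L^(m+2) ≠ 0 := pow_ne_zero _ hL
    field_simp
    push_cast
    ring

lemma hasDerivAt_F (n : ℕ) {t : ℝ} (ht : 1 < t) :
    HasDerivAt (fun s => ∑ k ∈ Finset.Icc 1 (n+1), (Nat.factorial (k-1) : ℝ) * s / Real.log s ^ k)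
      (1 / Real.log t - (Nat.factorial (n+1) : ℝ) / Real.log t ^ (n+2)) t := by
  have hl : Real.log t ≠ 0 := ne_of_gt (Real.log_pos ht)
  have key : ∀ k ∈ Finset.Icc 1 (n+1),
      HasDerivAt (fun s => (Nat.factorial (k-1) : ℝ) * s / Real.log s ^ k)
        ((Nat.factorial (k-1) : ℝ) * (1 / Real.log t ^ k - k / Real.log t ^ (k+1))) t := by
    intro k hk
    obtain ⟨j, rfl⟩ : ∃ j, k = j + 1 := by
      rcases Finset.mem_Icc.1 hk with ⟨h1, _⟩; exact ⟨k - 1, by omega⟩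
    have h := (hasDerivAt_div_log_pow j ht).const_mul (Nat.factorial (j+1-1) : ℝ)
    have : (fun s => (Nat.factorial (j+1-1) : ℝ) * (s / Real.log s ^ (j+1)))
        = fun s => (Nat.factorial (j+1-1) : ℝ) * s / Real.log s ^ (j+1) := by
      funext s; ring
    rw [this] at h
    refine h.congr_deriv ?_
    push_cast
    ring
  have hsum := HasDerivAt.fun_sum key
  refine hsum.congr_deriv ?_
  rw [telescope (n+1) hl]

lemma intIntegrable_invlogpow (m : ℕ) {a b : ℝ} (ha : 1 < a) (hab : a ≤ b) :
    IntervalIntegrable (fun t : ℝ => 1 / Real.log t ^ m) volume a b := by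
  apply ContinuousOn.intervalIntegrable
  apply contOn_invlogpow
  intro t htt
  rw [Set.uIcc_of_le hab] at htt
  exact lt_of_lt_of_le ha htt.1

lemma integral_identity (n : ℕ) {x : ℝ} (hx : 2 ≤ x) :
    ∫ t in (2:ℝ)..x, 1 / Real.log t
      = ((∑ k ∈ Finset.Icc 1 (n+1), (Nat.factorial (k-1) : ℝ) * x / Real.log x ^ k)
          - (∑ k ∈ Finset.Icc 1 (n+1), (Nat.factorial (k-1) : ℝ) * 2 / Real.log 2 ^ k))
        + (Nat.factorial (n+1) : ℝ) * ∫ t in (2:ℝ)..x, 1 / Real.log t ^ (n+2) := by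
  have h2 : (1:ℝ) < 2 := one_lt_two
  have hint1 : IntervalIntegrable (fun t : ℝ => 1 / Real.log t ^ 1) volume 2 x :=
    intIntegrable_invlogpow 1 h2 hx
  simp only [pow_one] at hint1
  have hint2 : IntervalIntegrable (fun t : ℝ => 1 / Real.log t ^ (n+2)) volume 2 x :=
    intIntegrable_invlogpow (n+2) h2 hx
  have hftc : ∫ t in (2:ℝ)..x,
      (1 / Real.log t - (Nat.factorial (n+1) : ℝ) / Real.log t ^ (n+2))
      = (∑ k ∈ Finset.Icc 1 (n+1), (Nat.factorial (k-1) : ℝ) * x / Real.log x ^ k)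
        - (∑ k ∈ Finset.Icc 1 (n+1), (Nat.factorial (k-1) : ℝ) * 2 / Real.log 2 ^ k) := by
    apply intervalIntegral.integral_eq_sub_of_hasDerivAt
    · intro t htt
      rw [Set.uIcc_of_le hx] at htt
      exact hasDerivAt_F n (lt_of_lt_of_le h2 htt.1)
    · apply IntervalIntegrable.sub hint1
      have := hint2.const_mul (Nat.factorial (n+1) : ℝ)
      simpa [mul_one_div, div_eq_mul_inv] using this
  have hsub : ∫ t in (2:ℝ)..x,
      (1 / Real.log t - (Nat.factorial (n+1) : ℝ) / Real.log t ^ (n+2))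
      = (∫ t in (2:ℝ)..x, 1 / Real.log t)
        - (Nat.factorial (n+1) : ℝ) * ∫ t in (2:ℝ)..x, 1 / Real.log t ^ (n+2) := by
    rw [intervalIntegral.integral_sub hint1]
    · congr 1
      rw [← intervalIntegral.integral_const_mul]
      congr 1; funext t; rw [mul_one_div]
    · have := hint2.const_mul (Nat.factorial (n+1) : ℝ)
      simpa [mul_one_div, div_eq_mul_inv] using this
  rw [hsub] at hftc
  linarith [hftc]
lemma log_27_ge : (3.28 : ℝ) ≤ Real.log 27 := by
  have h32 : Real.log 32 = 5 * Real.log 2 := by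
    rw [show (32:ℝ) = 2^5 by norm_num, Real.log_pow]; push_cast; ring
  have hsplit : Real.log 27 = Real.log 32 + Real.log (27/32) := by
    rw [← Real.log_mul (by norm_num) (by norm_num)]; norm_num
  have hlb : (1 : ℝ) - 1/(27/32) ≤ Real.log (27/32) := log_lb_s9 (by norm_num)
  have h2 := Real.log_two_gt_d9
  rw [hsplit, h32]
  norm_num at hlb ⊢
  linarith

lemma log_le_split {c d : ℝ} (hc : 2 ≤ c) (hcd : c = 2 * d) (hd : 1 ≤ d) :
    Real.log c ≤ 0.6931471808 + (d - 1) := by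
  have h2 := Real.log_two_lt_d9
  have : Real.log c = Real.log 2 + Real.log d := by
    rw [hcd, Real.log_mul (by norm_num) (by linarith)]
  rw [this]
  have := Real.log_le_sub_one_of_pos (show (0:ℝ) < d by linarith)
  norm_num at h2 ⊢
  linarith
lemma piece_lb (m : ℕ) {a b c : ℝ} (ha : 1 < a) (hab : a ≤ b) (hc : Real.log b ≤ c) :
    (b - a) * (1/c^m) ≤ ∫ t in a..b, 1/Real.log t^m := by
  have hc0 : 0 < c := lt_of_lt_of_le (Real.log_pos ha) (le_trans (Real.log_le_log (by linarith) hab) hc)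
  have hmono : ∀ t ∈ Set.Icc a b, (1:ℝ)/c^m ≤ 1/Real.log t^m := by
    intro t ht
    obtain ⟨ht1, ht2⟩ := ht
    have hlt : 0 < Real.log t := Real.log_pos (lt_of_lt_of_le ha ht1)
    have hle : Real.log t ≤ c := le_trans (Real.log_le_log (by linarith) ht2) hc
    apply one_div_le_one_div_of_le (pow_pos hlt m)
    exact pow_le_pow_left₀ (le_of_lt hlt) hle m
  have := intervalIntegral.integral_mono_on hab
    (_root_.intervalIntegrable_const (c := (1:ℝ)/c^m))
    (intIntegrable_invlogpow m ha hab) hmono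
  simpa [intervalIntegral.integral_const, smul_eq_mul] using this

lemma piece_nonneg (m : ℕ) {a b : ℝ} (ha : 1 < a) (hab : a ≤ b) :
    (0:ℝ) ≤ ∫ t in a..b, 1/Real.log t^m := by
  apply intervalIntegral.integral_nonneg hab
  intro t ht
  have := Real.log_pos (lt_of_lt_of_le ha ht.1)
  positivity

lemma int_2_27_ge (m : ℕ) (hm : 3 ≤ m) :
    (27:ℝ) / Real.log 27 ^ m ≤ ∫ t in (2:ℝ)..27, 1/Real.log t^m := by
  have h27 : (3.28:ℝ) ≤ Real.log 27 := log_27_ge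
  have hrhs : (27:ℝ) / Real.log 27 ^ m ≤ 27 / 3.28^m := by
    apply div_le_div_of_nonneg_left (by norm_num) (by positivity)
    exact pow_le_pow_left₀ (by norm_num) h27 m
  rcases eq_or_lt_of_le hm with heq | hlt
  · -- m = 3
    subst heq
    have hs1 : ∫ t in (2:ℝ)..27, 1/Real.log t^3
        = (∫ t in (2:ℝ)..2.2, 1/Real.log t^3) + (∫ t in (2.2:ℝ)..2.7, 1/Real.log t^3)
          + ∫ t in (2.7:ℝ)..27, 1/Real.log t^3 := by
      rw [intervalIntegral.integral_add_adjacent_intervals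
          (intIntegrable_invlogpow 3 (by norm_num) (by norm_num))
          (intIntegrable_invlogpow 3 (by norm_num) (by norm_num)),
        intervalIntegral.integral_add_adjacent_intervals
          (intIntegrable_invlogpow 3 (by norm_num) (by norm_num))
          (intIntegrable_invlogpow 3 (by norm_num) (by norm_num))]
    have hp1 := piece_lb 3 (a := 2) (b := 2.2) (c := 0.7931471808) (by norm_num) (by norm_num)
      (by have := log_le_split (c := 2.2) (d := 1.1) (by norm_num) (by norm_num) (by norm_num); norm_num at this ⊢; linarith)
    have hp2 := piece_lb 3 (a := 2.2) (b := 2.7) (c := 1.0431471808) (by norm_num) (by norm_num)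
      (by have := log_le_split (c := 2.7) (d := 1.35) (by norm_num) (by norm_num) (by norm_num); norm_num at this ⊢; linarith)
    have hp3 := piece_nonneg 3 (a := 2.7) (b := 27) (by norm_num) (by norm_num)
    rw [hs1]
    have : (27:ℝ) / 3.28^3 ≤ (2.2 - 2) * (1/0.7931471808^3) + (2.7 - 2.2) * (1/1.0431471808^3) + 0 := by
      norm_num
    linarith
  · -- m ≥ 4
    have hm4 : 4 ≤ m := hlt
    have hs1 : ∫ t in (2:ℝ)..27, 1/Real.log t^m
        = (∫ t in (2:ℝ)..2.5, 1/Real.log t^m) + ∫ t in (2.5:ℝ)..27, 1/Real.log t^m := by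
      rw [intervalIntegral.integral_add_adjacent_intervals
          (intIntegrable_invlogpow m (by norm_num) (by norm_num))
          (intIntegrable_invlogpow m (by norm_num) (by norm_num))]
    have hp1 := piece_lb m (a := 2) (b := 2.5) (c := 0.9431471808) (by norm_num) (by norm_num)
      (by have := log_le_split (c := 2.5) (d := 1.25) (by norm_num) (by norm_num) (by norm_num); norm_num at this ⊢; linarith)
    have hp2 := piece_nonneg m (a := 2.5) (b := 27) (by norm_num) (by norm_num)
    have hkey : (27:ℝ) / 3.28^m ≤ (2.5 - 2) * (1/0.9431471808^m) := by
      have h1 : (1:ℝ) ≤ 1/0.9431471808^m := by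
        have hp : (0:ℝ) < 0.9431471808^m := by positivity
        rw [le_div_iff₀ hp, one_mul]
        exact pow_le_one₀ (by norm_num) (by norm_num)
      have h2 : (27:ℝ) / 3.28^m ≤ 27 / 3.28^4 := by
        apply div_le_div_of_nonneg_left (by norm_num) (by positivity)
        exact pow_le_pow_right₀ (by norm_num) hm4
      calc (27:ℝ)/3.28^m ≤ 27/3.28^4 := h2
        _ ≤ (2.5-2) * 1 := by norm_num
        _ ≤ _ := by linarith
    rw [hs1]
    calc (27:ℝ)/Real.log 27^m ≤ 27/3.28^m := hrhs
      _ ≤ (2.5 - 2) * (1/0.9431471808^m) := hkey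
      _ ≤ _ := by linarith
lemma int_2_x_ge (m : ℕ) (hm : 3 ≤ m) {x : ℝ} (hx : 27 ≤ x) :
    x / Real.log x ^ m ≤ ∫ t in (2:ℝ)..x, 1/Real.log t^m := by
  obtain ⟨j, rfl⟩ : ∃ j, m = j + 1 := ⟨m - 1, by omega⟩
  have h2x : (2:ℝ) ≤ x := by linarith
  have hsplit : (∫ t in (2:ℝ)..27, 1/Real.log t^(j+1)) + (∫ t in (27:ℝ)..x, 1/Real.log t^(j+1))
      = ∫ t in (2:ℝ)..x, 1/Real.log t^(j+1) :=
    intervalIntegral.integral_add_adjacent_intervals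
      (intIntegrable_invlogpow (j+1) (by norm_num) (by norm_num))
      (intIntegrable_invlogpow (j+1) (by norm_num) hx)
  have hftc : ∫ t in (27:ℝ)..x, (1/Real.log t^(j+1) - (j+1)/Real.log t^(j+2))
      = x / Real.log x ^ (j+1) - 27 / Real.log 27 ^ (j+1) := by
    apply intervalIntegral.integral_eq_sub_of_hasDerivAt
    · intro t htt
      rw [Set.uIcc_of_le hx] at htt
      exact hasDerivAt_div_log_pow j (by have := htt.1; norm_num; linarith)
    · apply IntervalIntegrable.sub (intIntegrable_invlogpow (j+1) (by norm_num) hx)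
      have := (intIntegrable_invlogpow (j+2) (a := 27) (b := x) (by norm_num) hx).const_mul ((j:ℝ)+1)
      simpa [mul_one_div, div_eq_mul_inv] using this
  have hmono : ∫ t in (27:ℝ)..x, (1/Real.log t^(j+1) - (j+1)/Real.log t^(j+2))
      ≤ ∫ t in (27:ℝ)..x, 1/Real.log t^(j+1) := by
    apply intervalIntegral.integral_mono_on hx
    · apply IntervalIntegrable.sub (intIntegrable_invlogpow (j+1) (by norm_num) hx)
      have := (intIntegrable_invlogpow (j+2) (a := 27) (b := x) (by norm_num) hx).const_mul ((j:ℝ)+1)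
      simpa [mul_one_div, div_eq_mul_inv] using this
    · exact intIntegrable_invlogpow (j+1) (by norm_num) hx
    · intro t ht
      have hlt : 0 < Real.log t := Real.log_pos (by linarith [ht.1])
      have : (0:ℝ) ≤ (j+1)/Real.log t^(j+2) := by positivity
      linarith
  have h27 := int_2_27_ge (j+1) hm
  linarith
lemma key_ineq (n : ℕ) (hn : 0 < n) {x : ℝ} (hx : 27 ≤ x)
    (hA : x / (Real.log x) ^ (n + 2) ≥
      (1 / (Nat.factorial (n + 1) : ℝ)) *
        ∑ k ∈ Finset.Icc 1 (n + 1), 2 * (Nat.factorial (k - 1) : ℝ) / (Real.log 2) ^ k) :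
    (∑ k ∈ Finset.Icc 1 (n+1), (Nat.factorial (k-1) : ℝ) * x / Real.log x ^ k)
      ≤ ∫ t in (2:ℝ)..x, 1 / Real.log t := by
  have h2x : (2:ℝ) ≤ x := by linarith
  have hid := integral_identity n h2x
  have hN : (0:ℝ) < (Nat.factorial (n+1) : ℝ) := by positivity
  have hF2 : (∑ k ∈ Finset.Icc 1 (n+1), (Nat.factorial (k-1) : ℝ) * 2 / Real.log 2 ^ k)
      = ∑ k ∈ Finset.Icc 1 (n+1), 2 * (Nat.factorial (k-1) : ℝ) / Real.log 2 ^ k := by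
    apply Finset.sum_congr rfl; intro k _; ring
  have hA' : (∑ k ∈ Finset.Icc 1 (n+1), 2 * (Nat.factorial (k-1) : ℝ) / Real.log 2 ^ k)
      ≤ (Nat.factorial (n+1) : ℝ) * (x / Real.log x ^ (n+2)) := by
    have := mul_le_mul_of_nonneg_left hA (le_of_lt hN)
    calc (∑ k ∈ Finset.Icc 1 (n+1), 2 * (Nat.factorial (k-1) : ℝ) / Real.log 2 ^ k)
        = (Nat.factorial (n+1) : ℝ) * ((1 / (Nat.factorial (n+1) : ℝ)) *
            ∑ k ∈ Finset.Icc 1 (n+1), 2 * (Nat.factorial (k-1) : ℝ) / Real.log 2 ^ k) := by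
          field_simp
      _ ≤ _ := this
  have hI := int_2_x_ge (n+2) (by omega) hx
  have hI' : (Nat.factorial (n+1) : ℝ) * (x / Real.log x ^ (n+2))
      ≤ (Nat.factorial (n+1) : ℝ) * ∫ t in (2:ℝ)..x, 1/Real.log t^(n+2) :=
    mul_le_mul_of_nonneg_left hI (le_of_lt hN)
  rw [hid]
  rw [hF2] at *
  linarith
noncomputable def gg : ℝ → ℝ := fun u => 1 / Real.log (1+u) + 1 / Real.log (1-u)

lemma gg_bounds {u : ℝ} (hu : u ∈ Set.Ioo (0:ℝ) 1) : 0 ≤ gg u ∧ gg u ≤ 2 := by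
  obtain ⟨h0, h1⟩ := hu
  have hp : (0:ℝ) < 1 + u := by linarith
  have hm : (0:ℝ) < 1 - u := by linarith
  have hlogp_pos : 0 < Real.log (1+u) := Real.log_pos (by linarith)
  have hlogm_neg : Real.log (1-u) < 0 := Real.log_neg hm (by linarith)
  have hub : Real.log (1+u) ≤ u := by
    have := Real.log_le_sub_one_of_pos hp; linarith
  have hlb : u/(1+u) ≤ Real.log (1+u) := by
    have := log_lb_s9 hp
    have heq : 1 - 1/(1+u) = u/(1+u) := by field_simp; ring
    linarith [heq ▸ this]
  have hmub : Real.log (1-u) ≤ -u := by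
    have := Real.log_le_sub_one_of_pos hm; linarith
  have hmlb : -u/(1-u) ≤ Real.log (1-u) := by
    have := log_lb_s9 hm
    have heq : 1 - 1/(1-u) = -u/(1-u) := by field_simp; ring
    linarith [heq ▸ this]
  constructor
  · have ha : 1/u ≤ 1 / Real.log (1+u) := one_div_le_one_div_of_le hlogp_pos hub
    have hb : 1/(-u) ≤ 1 / Real.log (1-u) :=
      one_div_le_one_div_of_neg_of_le (by linarith) hmub
    have : 1/(-u) = -(1/u) := by field_simp
    unfold gg
    rw [this] at hb
    linarith
  · have ha : 1 / Real.log (1+u) ≤ 1/(u/(1+u)) :=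
      one_div_le_one_div_of_le (by positivity) hlb
    have hb : 1 / Real.log (1-u) ≤ 1/(-u/(1-u)) :=
      one_div_le_one_div_of_neg_of_le hlogm_neg hmlb
    have ha' : 1/(u/(1+u)) = (1+u)/u := one_div_div _ _
    have hb' : 1/(-u/(1-u)) = (1-u)/(-u) := one_div_div _ _
    have hu0 : u ≠ 0 := ne_of_gt h0
    have hsum : (1+u)/u + (1-u)/(-u) = 2 := by
      rw [div_neg, ← sub_eq_add_neg, div_sub_div_same]
      rw [show (1+u) - (1-u) = 2*u by ring, mul_div_assoc, div_self hu0, mul_one]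
    unfold gg
    rw [ha'] at ha; rw [hb'] at hb
    linarith

lemma gg_bounds' {u : ℝ} (hu : u ∈ Set.Ioc (0:ℝ) 1) : 0 ≤ gg u ∧ gg u ≤ 2 := by
  rcases eq_or_lt_of_le hu.2 with heq | hlt
  · subst heq
    unfold gg
    norm_num
    have h2 := Real.log_two_gt_d9
    constructor
    · positivity
    · calc (Real.log 2)⁻¹ ≤ (0.6931471803:ℝ)⁻¹ := by
            apply inv_anti₀ (by norm_num) h2.le
        _ ≤ 2 := by norm_num
  · exact gg_bounds ⟨hu.1, hlt⟩

lemma gg_meas : Measurable gg := by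
  unfold gg
  apply Measurable.add
  · exact measurable_const.div (Real.measurable_log.comp (measurable_const.add measurable_id))
  · exact measurable_const.div (Real.measurable_log.comp (measurable_const.sub measurable_id))

lemma gg_intable {a b : ℝ} (ha : 0 ≤ a) (hab : a ≤ b) (hb : b ≤ 1) :
    IntervalIntegrable gg volume a b := by
  rw [intervalIntegrable_iff_integrableOn_Ioc_of_le hab]
  apply MeasureTheory.Measure.integrableOn_of_bounded (M := 2)
  · simp [Real.volume_Ioc]
  · exact gg_meas.aestronglyMeasurable
  · apply MeasureTheory.ae_restrict_of_forall_mem measurableSet_Ioc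
    intro u hu
    have := gg_bounds' ⟨lt_of_le_of_lt ha hu.1, le_trans hu.2 hb⟩
    rw [Real.norm_eq_abs, abs_le]
    constructor <;> linarith [this.1, this.2]
lemma intIntegrable_invlog {a b : ℝ} (ha : 1 < a) (hab : a ≤ b) :
    IntervalIntegrable (fun t : ℝ => 1 / Real.log t) volume a b := by
  have := intIntegrable_invlogpow 1 ha hab
  simpa using this

lemma intable_logm {ε : ℝ} (hε : 0 < ε) (hε1 : ε ≤ 1) :
    IntervalIntegrable (fun u : ℝ => 1 / Real.log (1-u)) volume ε 1 := by
  rw [intervalIntegrable_iff_integrableOn_Ioc_of_le hε1]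
  apply MeasureTheory.Measure.integrableOn_of_bounded (M := 1/ε)
  · simp [Real.volume_Ioc]
  · exact (measurable_const.div
      (Real.measurable_log.comp (measurable_const.sub measurable_id))).aestronglyMeasurable
  · apply MeasureTheory.ae_restrict_of_forall_mem measurableSet_Ioc
    intro u hu
    rcases eq_or_lt_of_le hu.2 with heq | hlt
    · subst heq
      simp [Real.norm_eq_abs]
      positivity
    · have h0 : 0 < u := hε.trans hu.1
      have hm : 0 < 1 - u := by linarith
      have hmub : Real.log (1-u) ≤ -u := by
        have := Real.log_le_sub_one_of_pos hm; linarith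
      have hne : Real.log (1-u) < 0 := by linarith
      rw [Real.norm_eq_abs, abs_div, abs_one, abs_of_neg hne]
      rw [div_le_div_iff₀ (by linarith) hε]
      have : ε ≤ u := le_of_lt hu.1
      nlinarith
lemma intable_logp {ε : ℝ} (hε : 0 < ε) (hε1 : ε ≤ 1) :
    IntervalIntegrable (fun u : ℝ => 1 / Real.log (1+u)) volume ε 1 := by
  have h := (intIntegrable_invlog (a := 1 + ε) (b := 2) (by linarith) (by linarith)).comp_add_left 1
  rw [show (2:ℝ) - 1 = 1 from by norm_num, show (1:ℝ) + ε - 1 = ε from by ring] at h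
  exact h

lemma eventual_eq {x : ℝ} (hx : 2 ≤ x) : ∀ ε ∈ Set.Ioo (0:ℝ) 1,
    (∫ t in (0:ℝ)..(1 - ε), 1 / Real.log t) + ∫ t in (1 + ε)..x, 1 / Real.log t
      = ((∫ u in (0:ℝ)..1, gg u) - (∫ u in (0:ℝ)..ε, gg u)) + ∫ t in (2:ℝ)..x, 1 / Real.log t := by
  intro ε hε
  obtain ⟨hε0, hε1⟩ := hε
  have eq1 : (∫ t in (0:ℝ)..(1 - ε), 1 / Real.log t)
      = ∫ u in ε..1, 1 / Real.log (1 - u) := by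
    have h := intervalIntegral.integral_comp_sub_left (a := ε) (b := 1)
      (fun t : ℝ => 1 / Real.log t) 1
    rw [show (1:ℝ) - 1 = 0 from by norm_num] at h
    exact h.symm
  have eq2 : (∫ t in (1 + ε:ℝ)..2, 1 / Real.log t)
      = ∫ u in ε..1, 1 / Real.log (1 + u) := by
    have h := intervalIntegral.integral_comp_add_left (a := ε) (b := 1)
      (fun t : ℝ => 1 / Real.log t) 1
    rw [show (1:ℝ) + 1 = 2 from by norm_num] at h
    exact h.symm
  have hsplit : (∫ t in (1 + ε:ℝ)..2, 1 / Real.log t) + (∫ t in (2:ℝ)..x, 1 / Real.log t)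
      = ∫ t in (1 + ε:ℝ)..x, 1 / Real.log t :=
    intervalIntegral.integral_add_adjacent_intervals
      (intIntegrable_invlog (by linarith) (by linarith))
      (intIntegrable_invlog (by norm_num) hx)
  have hgsplit : (∫ u in (0:ℝ)..ε, gg u) + (∫ u in ε..1, gg u) = ∫ u in (0:ℝ)..1, gg u :=
    intervalIntegral.integral_add_adjacent_intervals
      (gg_intable (le_refl 0) (le_of_lt hε0) (le_of_lt hε1))
      (gg_intable (le_of_lt hε0) (le_of_lt hε1) (le_refl 1))
  have hgg : ∫ u in ε..1, gg u
      = (∫ u in ε..1, 1 / Real.log (1 + u)) + ∫ u in ε..1, 1 / Real.log (1 - u) := by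
    unfold gg
    rw [intervalIntegral.integral_add (intable_logp hε0 (le_of_lt hε1))
      (intable_logm hε0 (le_of_lt hε1))]
  rw [eq1, ← hsplit, eq2]
  have : (∫ u in ε..1, gg u) = (∫ u in (0:ℝ)..1, gg u) - ∫ u in (0:ℝ)..ε, gg u := by
    linarith
  linarith [hgg, this]

lemma tendsto_pv {x : ℝ} (hx : 2 ≤ x) :
    Filter.Tendsto
      (fun ε => (∫ t in (0:ℝ)..(1 - ε), 1 / Real.log t) + ∫ t in (1 + ε)..x, 1 / Real.log t)
      (nhdsWithin (0:ℝ) (Set.Ioi 0))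
      (nhds ((∫ u in (0:ℝ)..1, gg u) + ∫ t in (2:ℝ)..x, 1 / Real.log t)) := by
  have hzero : Filter.Tendsto (fun ε : ℝ => ∫ u in (0:ℝ)..ε, gg u)
      (nhdsWithin (0:ℝ) (Set.Ioi 0)) (nhds 0) := by
    apply squeeze_zero_norm'
    · filter_upwards [Ioo_mem_nhdsGT_of_mem (Set.mem_Ico.2 ⟨le_refl (0:ℝ), one_pos⟩)]
      intro ε hε
      have hb := intervalIntegral.norm_integral_le_of_norm_le_const (C := 2)
        (f := gg) (a := (0:ℝ)) (b := ε) ?_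
      · calc ‖∫ u in (0:ℝ)..ε, gg u‖ ≤ 2 * |ε - 0| := hb
          _ = 2 * ε := by rw [sub_zero, abs_of_pos hε.1]
      · intro u hu
        rw [Set.uIoc_of_le (le_of_lt hε.1)] at hu
        have := gg_bounds' ⟨hu.1, le_trans hu.2 (le_of_lt hε.2)⟩
        rw [Real.norm_eq_abs, abs_le]
        constructor <;> linarith [this.1, this.2]
    · have h1 : Filter.Tendsto (fun ε : ℝ => ε) (nhds (0:ℝ)) (nhds 0) := Filter.tendsto_id
      have h2 := h1.const_mul (2:ℝ)
      rw [mul_zero] at h2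
      exact h2.mono_left nhdsWithin_le_nhds
  have htend : Filter.Tendsto
      (fun ε : ℝ => ((∫ u in (0:ℝ)..1, gg u) - (∫ u in (0:ℝ)..ε, gg u))
        + ∫ t in (2:ℝ)..x, 1 / Real.log t)
      (nhdsWithin (0:ℝ) (Set.Ioi 0))
      (nhds ((∫ u in (0:ℝ)..1, gg u) + ∫ t in (2:ℝ)..x, 1 / Real.log t)) := by
    have h1 := (tendsto_const_nhds (x := ∫ u in (0:ℝ)..1, gg u)
      (f := nhdsWithin (0:ℝ) (Set.Ioi 0))).sub hzero
    have h2 := h1.add (tendsto_const_nhds (x := ∫ t in (2:ℝ)..x, 1 / Real.log t)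
      (f := nhdsWithin (0:ℝ) (Set.Ioi 0)))
    simpa using h2
  apply htend.congr'
  filter_upwards [Ioo_mem_nhdsGT_of_mem (Set.mem_Ico.2 ⟨le_refl (0:ℝ), one_pos⟩)]
  intro ε hε
  exact (eventual_eq hx ε hε).symm
theorem li_ge_sum (n : ℕ) (hn : 0 < n) (x : ℝ) (hx : 27 ≤ x)
    (hA : x / (Real.log x) ^ (n + 2) ≥
      (1 / (Nat.factorial (n + 1) : ℝ)) *
        ∑ k ∈ Finset.Icc 1 (n + 1), 2 * (Nat.factorial (k - 1) : ℝ) / (Real.log 2) ^ k) :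
    li x ≥ ∑ k ∈ Finset.Icc 1 (n + 1), (Nat.factorial (k - 1) : ℝ) * x / (Real.log x) ^ k := by
  have h2x : (2:ℝ) ≤ x := by linarith
  have hli : li x = (∫ u in (0:ℝ)..1, gg u) + ∫ t in (2:ℝ)..x, 1 / Real.log t :=
    (tendsto_pv h2x).limUnder_eq
  have hgpos : 0 ≤ ∫ u in (0:ℝ)..1, gg u := by
    apply intervalIntegral.integral_nonneg (by norm_num)
    intro u hu
    rcases eq_or_lt_of_le hu.1 with heq | hlt
    · rw [← heq]; unfold gg; norm_num
    · exact (gg_bounds' ⟨hlt, hu.2⟩).1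
  have hkey := key_ineq n hn hx hA
  rw [hli]
  linarith
end

section
/- For every real x ≥ 4 and every positive integer n, li(x) ≤ ∑_{k=1}^{n} (k−1)!·x/log^k x + n!·√x/log^{n+1} 2 + n!·2^{n+1}·x/log^{n+1} x. -/
open Real MeasureTheory intervalIntegral Filter Set

lemma pvf_bounds {t : ℝ} (h0 : 0 < t) (h1 : t < 1) :
    0 ≤ 1 / Real.log t + 1 / Real.log (2 - t) ∧
      1 / Real.log t + 1 / Real.log (2 - t) ≤ 2 := by
  have hlt : Real.log t < 0 := Real.log_neg h0 h1
  have hlg : 0 < Real.log (2 - t) := Real.log_pos (by linarith)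
  have h2t : (0:ℝ) < 2 - t := by linarith
  have ht1 : t - 1 < 0 := by linarith
  have h1t : (0:ℝ) < 1 - t := by linarith
  have ha : t - 1 ≠ 0 := by linarith
  have hb : 1 - t ≠ 0 := by linarith
  have hc : t ≠ 0 := by linarith
  have hd : 2 - t ≠ 0 := by linarith
  have hlb1 : Real.log t ≤ t - 1 := Real.log_le_sub_one_of_pos h0
  have hlb2 : Real.log (2 - t) ≤ 2 - t - 1 := Real.log_le_sub_one_of_pos h2t
  constructor
  · have e1 : 1 / (t - 1) ≤ 1 / Real.log t :=
      one_div_le_one_div_of_neg_of_le ht1 hlb1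
    have e2 : 1 / (1 - t) ≤ 1 / Real.log (2 - t) :=
      one_div_le_one_div_of_le hlg (by linarith)
    have e3 : 1 / (t - 1) + 1 / (1 - t) = 0 := by field_simp; ring
    linarith
  · have hub1' : (t - 1) / t ≤ Real.log t := by
      have h := Real.one_sub_inv_le_log_of_pos h0
      have e : 1 - t⁻¹ = (t - 1) / t := by field_simp
      linarith [e ▸ h]
    have e1 : 1 / Real.log t ≤ 1 / ((t - 1) / t) :=
      one_div_le_one_div_of_neg_of_le hlt hub1'
    have hub2' : (1 - t) / (2 - t) ≤ Real.log (2 - t) := by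
      have h := Real.one_sub_inv_le_log_of_pos h2t
      have e : 1 - (2 - t)⁻¹ = (1 - t) / (2 - t) := by field_simp; ring
      linarith [e ▸ h]
    have e2 : 1 / Real.log (2 - t) ≤ 1 / ((1 - t) / (2 - t)) :=
      one_div_le_one_div_of_le (by positivity) hub2'
    have e3 : 1 / ((t - 1) / t) + 1 / ((1 - t) / (2 - t)) = 2 := by
      rw [one_div_div, one_div_div]
      field_simp
      ring
    linarith

lemma intInt_one_div_log_left {ε : ℝ} (h0 : 0 < ε) (h1 : ε < 1) :
    IntervalIntegrable (fun t => 1 / Real.log t) volume 0 (1 - ε) := by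
  rw [intervalIntegrable_iff, uIoc_of_le (by linarith)]
  apply Measure.integrableOn_of_bounded (M := 1 / (-Real.log (1 - ε)))
      measure_Ioc_lt_top.ne
      (Real.measurable_log.inv.aestronglyMeasurable.congr ?eq)
  case eq => exact Filter.Eventually.of_forall (fun t => (one_div _).symm)
  refine (ae_restrict_iff' measurableSet_Ioc).2 (ae_of_all _ fun t ht => ?_)
  obtain ⟨ht0, ht1⟩ := ht
  have hlt : Real.log t < 0 := Real.log_neg ht0 (by linarith)
  have hle : Real.log t ≤ Real.log (1 - ε) := Real.log_le_log ht0 ht1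
  have hlε : Real.log (1 - ε) < 0 := Real.log_neg (by linarith) (by linarith)
  rw [Real.norm_eq_abs, abs_of_nonpos (div_nonpos_of_nonneg_of_nonpos one_pos.le hlt.le),
    ← one_div_neg_eq_neg_one_div]
  exact one_div_le_one_div_of_le (by linarith) (by linarith)

lemma intInt_one_div_log_right {a b : ℝ} (ha : 1 < a) (hab : a ≤ b) :
    IntervalIntegrable (fun t => 1 / Real.log t) volume a b := by
  apply ContinuousOn.intervalIntegrable
  apply ContinuousOn.div continuousOn_const
  · exact Real.continuousOn_log.mono (fun t ht => by
      simp only [Set.mem_compl_iff, Set.mem_singleton_iff]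
      rw [Set.uIcc_of_le hab] at ht
      exact (by linarith [ht.1] : t ≠ 0))
  · intro t ht
    rw [Set.uIcc_of_le hab] at ht
    exact (Real.log_pos (by linarith [ht.1])).ne'

lemma intInt_one_div_log_two_sub {ε : ℝ} (h0 : 0 < ε) (h1 : ε < 1) :
    IntervalIntegrable (fun t => 1 / Real.log (2 - t)) volume 0 (1 - ε) := by
  apply ContinuousOn.intervalIntegrable
  have hsub : Continuous (fun t : ℝ => 2 - t) := continuous_const.sub continuous_id
  apply ContinuousOn.div continuousOn_const
  · apply Real.continuousOn_log.comp hsub.continuousOn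
    intro t ht
    rw [Set.uIcc_of_le (by linarith)] at ht
    simp only [Set.mem_compl_iff, Set.mem_singleton_iff]
    have := ht.2; have := ht.1
    intro h; linarith [h ▸ (by linarith : (1:ℝ) ≤ 2 - t)]
  · intro t ht
    rw [Set.uIcc_of_le (by linarith)] at ht
    exact (Real.log_pos (by linarith [ht.2])).ne'

lemma intInt_pow_log {m : ℕ} {x : ℝ} (hx : 2 ≤ x) :
    IntervalIntegrable (fun t => 1 / (Real.log t) ^ m) volume 2 x := by
  apply ContinuousOn.intervalIntegrable
  apply ContinuousOn.div continuousOn_const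
  · apply ContinuousOn.pow
    exact Real.continuousOn_log.mono (fun t ht => by
      rw [Set.uIcc_of_le hx] at ht
      simp only [Set.mem_compl_iff, Set.mem_singleton_iff]
      exact (by linarith [ht.1] : t ≠ 0))
  · intro t ht
    rw [Set.uIcc_of_le hx] at ht
    exact pow_ne_zero _ (Real.log_pos (by linarith [ht.1])).ne'

lemma ibp_step {k : ℕ} {x : ℝ} (hx : 2 ≤ x) :
    ∫ t in (2:ℝ)..x, 1 / (Real.log t) ^ (k + 1)
      = x / (Real.log x) ^ (k + 1) - 2 / (Real.log 2) ^ (k + 1)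
        + (k + 1) * ∫ t in (2:ℝ)..x, 1 / (Real.log t) ^ (k + 2) := by
  have hderiv : ∀ t ∈ Set.uIcc (2:ℝ) x,
      HasDerivAt (fun t => t / (Real.log t) ^ (k + 1))
        (1 / (Real.log t) ^ (k + 1) - (k + 1) / (Real.log t) ^ (k + 2)) t := by
    intro t ht
    rw [Set.uIcc_of_le hx] at ht
    have ht2 : (2:ℝ) ≤ t := ht.1
    have hlog : 0 < Real.log t := Real.log_pos (by linarith)
    have h1 : HasDerivAt Real.log t⁻¹ t := Real.hasDerivAt_log (by linarith)
    have h2 : HasDerivAt (fun t => (Real.log t) ^ (k + 1))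
        ((k + 1) * (Real.log t) ^ k * t⁻¹) t := by
      exact (h1.pow (k + 1)).congr_deriv (by simp)
    have h3 := (hasDerivAt_id t).div h2 (pow_ne_zero _ hlog.ne')
    refine h3.congr_deriv ?_
    have htne : t ≠ 0 := by linarith
    have hlne : Real.log t ≠ 0 := hlog.ne'
    simp only [id]
    field_simp
    ring
  have heq := intervalIntegral.integral_eq_sub_of_hasDerivAt hderiv
    ((intInt_pow_log hx).sub (by
      have := (intInt_pow_log (m := k + 2) hx).const_mul ((k:ℝ) + 1)
      simpa [div_eq_mul_inv] using this))
  rw [intervalIntegral.integral_sub (intInt_pow_log hx) (by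
      have := (intInt_pow_log (m := k + 2) hx).const_mul ((k:ℝ) + 1)
      simpa [div_eq_mul_inv] using this)] at heq
  have hmul : (∫ t in (2:ℝ)..x, ((k:ℝ) + 1) / (Real.log t) ^ (k + 2))
      = ((k:ℝ) + 1) * ∫ t in (2:ℝ)..x, 1 / (Real.log t) ^ (k + 2) := by
    rw [← intervalIntegral.integral_const_mul]
    congr 1; ext t; rw [mul_one_div]
  rw [hmul] at heq
  linarith [heq]

lemma ibp_full {x : ℝ} (hx : 2 ≤ x) (n : ℕ) :
    ∫ t in (2:ℝ)..x, 1 / Real.log t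
      = (∑ k ∈ Finset.Icc 1 n, (Nat.factorial (k - 1) : ℝ) *
          (x / (Real.log x) ^ k - 2 / (Real.log 2) ^ k))
        + (Nat.factorial n : ℝ) * ∫ t in (2:ℝ)..x, 1 / (Real.log t) ^ (n + 1) := by
  induction n with
  | zero => simp [pow_one]
  | succ n ih =>
    rw [ih, ibp_step hx, Finset.sum_Icc_succ_top (by omega : 1 ≤ n + 1)]
    have : (Nat.factorial (n + 1 - 1) : ℝ) = (Nat.factorial n : ℝ) := by norm_num
    rw [this]
    have hfac : (Nat.factorial (n + 1) : ℝ) = ((n:ℝ) + 1) * Nat.factorial n := by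
      rw [Nat.factorial_succ]; push_cast; ring
    rw [hfac]
    ring

lemma remainder_bound {x : ℝ} (hx : 4 ≤ x) (n : ℕ) :
    ∫ t in (2:ℝ)..x, 1 / (Real.log t) ^ (n + 1)
      ≤ Real.sqrt x / (Real.log 2) ^ (n + 1) + 2 ^ (n + 1) * x / (Real.log x) ^ (n + 1) := by
  have hx2 : (2:ℝ) ≤ x := by linarith
  have hs2 : (2:ℝ) ≤ Real.sqrt x := by
    rw [show (2:ℝ) = Real.sqrt 4 by rw [show (4:ℝ) = 2^2 by norm_num, Real.sqrt_sq (by norm_num)]]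
    exact Real.sqrt_le_sqrt hx
  have hsx : Real.sqrt x ≤ x := by
    have h := Real.sqrt_le_sqrt (by nlinarith : x ≤ x ^ 2)
    rwa [Real.sqrt_sq (by linarith)] at h
  have hlog2 : 0 < Real.log 2 := Real.log_pos one_lt_two
  have hlogs : 0 < Real.log (Real.sqrt x) := Real.log_pos (by linarith)
  have hlogx : 0 < Real.log x := Real.log_pos (by linarith)
  -- split
  have hsplit : (∫ t in (2:ℝ)..x, 1 / (Real.log t) ^ (n + 1))
      = (∫ t in (2:ℝ)..Real.sqrt x, 1 / (Real.log t) ^ (n + 1))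
        + ∫ t in Real.sqrt x..x, 1 / (Real.log t) ^ (n + 1) := by
    symm
    apply integral_add_adjacent_intervals
    · exact intInt_pow_log hs2
    · exact ((intInt_pow_log hx2).mono_set (by
        rw [Set.uIcc_of_le hx2, Set.uIcc_of_le hsx]
        exact Set.Icc_subset_Icc hs2 le_rfl))
  have hb1 : (∫ t in (2:ℝ)..Real.sqrt x, 1 / (Real.log t) ^ (n + 1))
      ≤ Real.sqrt x / (Real.log 2) ^ (n + 1) := by
    calc (∫ t in (2:ℝ)..Real.sqrt x, 1 / (Real.log t) ^ (n + 1))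
        ≤ ∫ _t in (2:ℝ)..Real.sqrt x, 1 / (Real.log 2) ^ (n + 1) := by
          apply intervalIntegral.integral_mono_on hs2 (intInt_pow_log hs2)
            intervalIntegrable_const
          intro t ⟨ht1, _⟩
          apply one_div_le_one_div_of_le (by positivity)
          exact pow_le_pow_left₀ hlog2.le (Real.log_le_log (by norm_num) ht1) _
      _ ≤ Real.sqrt x / (Real.log 2) ^ (n + 1) := by
          simp only [intervalIntegral.integral_const, smul_eq_mul]
          rw [show Real.sqrt x / (Real.log 2) ^ (n + 1)
              = Real.sqrt x * (1 / (Real.log 2) ^ (n + 1)) from div_eq_mul_one_div _ _]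
          have hc : (0:ℝ) ≤ 1 / (Real.log 2) ^ (n + 1) := by positivity
          nlinarith [hc, hs2]
  have hb2 : (∫ t in Real.sqrt x..x, 1 / (Real.log t) ^ (n + 1))
      ≤ 2 ^ (n + 1) * x / (Real.log x) ^ (n + 1) := by
    have hintR : IntervalIntegrable (fun t => 1 / (Real.log t) ^ (n+1)) volume (Real.sqrt x) x :=
      ((intInt_pow_log hx2).mono_set (by
        rw [Set.uIcc_of_le hx2, Set.uIcc_of_le hsx]
        exact Set.Icc_subset_Icc hs2 le_rfl))
    calc (∫ t in Real.sqrt x..x, 1 / (Real.log t) ^ (n + 1))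
        ≤ ∫ _t in Real.sqrt x..x, 1 / (Real.log (Real.sqrt x)) ^ (n + 1) := by
          apply intervalIntegral.integral_mono_on hsx hintR intervalIntegrable_const
          intro t ⟨ht1, _⟩
          apply one_div_le_one_div_of_le (by positivity)
          exact pow_le_pow_left₀ hlogs.le (Real.log_le_log (by linarith) ht1) _
      _ ≤ x * (1 / (Real.log (Real.sqrt x)) ^ (n + 1)) := by
          simp only [intervalIntegral.integral_const, smul_eq_mul]
          have hc : (0:ℝ) ≤ 1 / (Real.log (Real.sqrt x)) ^ (n + 1) := by positivity
          nlinarith [hc, Real.sqrt_nonneg x]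
      _ = 2 ^ (n + 1) * x / (Real.log x) ^ (n + 1) := by
          rw [Real.log_sqrt (by linarith), div_pow]
          field_simp
  linarith [hsplit, hb1, hb2]

lemma pvf_norm_le {t : ℝ} (h0 : 0 < t) (h1 : t ≤ 1) :
    ‖1 / Real.log t + 1 / Real.log (2 - t)‖ ≤ 2 := by
  rcases eq_or_lt_of_le h1 with rfl | h1
  · norm_num
  · obtain ⟨hl, hu⟩ := pvf_bounds h0 h1
    rw [Real.norm_eq_abs, abs_of_nonneg hl]; exact hu

lemma pvf_intInt {a b : ℝ} (ha : 0 ≤ a) (hab : a ≤ b) (hb : b ≤ 1) :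
    IntervalIntegrable (fun t => 1 / Real.log t + 1 / Real.log (2 - t)) volume a b := by
  rw [intervalIntegrable_iff, uIoc_of_le hab]
  apply Measure.integrableOn_of_bounded (M := 2) measure_Ioc_lt_top.ne
  · apply Measurable.aestronglyMeasurable
    apply Measurable.add
    · exact (measurable_const.div Real.measurable_log)
    · exact measurable_const.div (Real.measurable_log.comp (measurable_const.sub measurable_id))
  · refine (ae_restrict_iff' measurableSet_Ioc).2 (ae_of_all _ fun t ht => ?_)
    exact pvf_norm_le (lt_of_le_of_lt ha ht.1) (ht.2.trans hb)

lemma li_eq {x : ℝ} (hx : 2 ≤ x) :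
    li x = (∫ t in (0:ℝ)..1, (1 / Real.log t + 1 / Real.log (2 - t))) +
      ∫ t in (2:ℝ)..x, 1 / Real.log t := by
  apply Filter.Tendsto.limUnder_eq
  have hIoo : Set.Ioo (0:ℝ) 1 ∈ nhdsWithin (0:ℝ) (Set.Ioi 0) :=
    Ioo_mem_nhdsGT_of_mem ⟨le_refl _, one_pos⟩
  -- rewrite g on Ioo 0 1
  have hg : ∀ ε ∈ Set.Ioo (0:ℝ) 1,
      ((∫ t in (0:ℝ)..(1 - ε), 1 / Real.log t) + ∫ t in (1 + ε)..x, 1 / Real.log t)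
      = (∫ t in (0:ℝ)..(1 - ε), (1 / Real.log t + 1 / Real.log (2 - t))) +
        ∫ t in (2:ℝ)..x, 1 / Real.log t := by
    intro ε ⟨hε0, hε1⟩
    have hsplit : (∫ t in (1 + ε)..x, 1 / Real.log t)
        = (∫ t in (1 + ε)..(2:ℝ), 1 / Real.log t) + ∫ t in (2:ℝ)..x, 1 / Real.log t :=
      (integral_add_adjacent_intervals
        (intInt_one_div_log_right (by linarith) (by linarith))
        (intInt_one_div_log_right one_lt_two hx)).symm
    have hsub : (∫ t in (0:ℝ)..(1 - ε), 1 / Real.log (2 - t))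
        = ∫ t in (1 + ε)..(2:ℝ), 1 / Real.log t := by
      have := intervalIntegral.integral_comp_sub_left (a := 0) (b := 1 - ε)
        (fun t => 1 / Real.log t) 2
      rw [show (2:ℝ) - (1 - ε) = 1 + ε by ring, show (2:ℝ) - 0 = 2 by ring] at this
      simpa using this
    rw [hsplit, integral_add (intInt_one_div_log_left hε0 hε1)
      (intInt_one_div_log_two_sub hε0 hε1), hsub]
    ring
  rw [show nhds ((∫ t in (0:ℝ)..1, (1 / Real.log t + 1 / Real.log (2 - t))) +
      ∫ t in (2:ℝ)..x, 1 / Real.log t) = nhds ((∫ t in (0:ℝ)..1,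
      (1 / Real.log t + 1 / Real.log (2 - t))) + ∫ t in (2:ℝ)..x, 1 / Real.log t) from rfl]
  have key : Filter.Tendsto
      (fun ε => (∫ t in (0:ℝ)..(1 - ε), (1 / Real.log t + 1 / Real.log (2 - t))) +
        ∫ t in (2:ℝ)..x, 1 / Real.log t)
      (nhdsWithin (0:ℝ) (Set.Ioi 0))
      (nhds ((∫ t in (0:ℝ)..1, (1 / Real.log t + 1 / Real.log (2 - t))) +
        ∫ t in (2:ℝ)..x, 1 / Real.log t)) := by
    apply Filter.Tendsto.add_const
    -- ∫_0^{1-ε} f = ∫_0^1 f - ∫_{1-ε}^1 f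
    have hdecomp : ∀ ε ∈ Set.Ioo (0:ℝ) 1,
        (∫ t in (0:ℝ)..(1 - ε), (1 / Real.log t + 1 / Real.log (2 - t)))
        = (∫ t in (0:ℝ)..1, (1 / Real.log t + 1 / Real.log (2 - t))) -
          ∫ t in (1 - ε)..1, (1 / Real.log t + 1 / Real.log (2 - t)) := by
      intro ε ⟨hε0, hε1⟩
      rw [eq_sub_iff_add_eq]
      exact integral_add_adjacent_intervals
        (pvf_intInt (by linarith) (by linarith) (by linarith))
        (pvf_intInt (by linarith) (by linarith) le_rfl)
    have htail : Filter.Tendsto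
        (fun ε => ∫ t in (1 - ε)..1, (1 / Real.log t + 1 / Real.log (2 - t)))
        (nhdsWithin (0:ℝ) (Set.Ioi 0)) (nhds 0) := by
      apply squeeze_zero_norm'
      · filter_upwards [hIoo] with ε ⟨hε0, hε1⟩
        calc ‖∫ t in (1 - ε)..1, (1 / Real.log t + 1 / Real.log (2 - t))‖
            ≤ 2 * |1 - (1 - ε)| := by
              apply intervalIntegral.norm_integral_le_of_norm_le_const
              intro t ht
              rw [uIoc_of_le (by linarith)] at ht
              exact pvf_norm_le (by linarith [ht.1]) ht.2
          _ = 2 * ε := by rw [abs_of_nonneg (by linarith)]; ring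
      · have : Filter.Tendsto (fun ε : ℝ => 2 * ε) (nhdsWithin (0:ℝ) (Set.Ioi 0)) (nhds (2 * 0)) :=
          (continuous_const.mul continuous_id).continuousAt.tendsto.comp
            (nhdsWithin_le_nhds)
        simpa using this
    have : Filter.Tendsto
        (fun ε => (∫ t in (0:ℝ)..1, (1 / Real.log t + 1 / Real.log (2 - t))) -
          ∫ t in (1 - ε)..1, (1 / Real.log t + 1 / Real.log (2 - t)))
        (nhdsWithin (0:ℝ) (Set.Ioi 0))
        (nhds ((∫ t in (0:ℝ)..1, (1 / Real.log t + 1 / Real.log (2 - t))) - 0)) :=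
      Filter.Tendsto.const_sub _ htail
    rw [sub_zero] at this
    apply this.congr'
    filter_upwards [hIoo] with ε hε
    exact (hdecomp ε hε).symm
  apply key.congr'
  filter_upwards [hIoo] with ε hε
  exact (hg ε hε).symm

theorem li_le_sum (n : ℕ) (hn : 0 < n) (x : ℝ) (hx : 4 ≤ x) :
    li x ≤
      (∑ k ∈ Finset.Icc 1 n, (Nat.factorial (k - 1) : ℝ) * x / (Real.log x) ^ k) +
        (Nat.factorial n : ℝ) * Real.sqrt x / (Real.log 2) ^ (n + 1) +
        (Nat.factorial n : ℝ) * 2 ^ (n + 1) * x / (Real.log x) ^ (n + 1) := by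
  have hx2 : (2:ℝ) ≤ x := by linarith
  have hlog2 : 0 < Real.log 2 := Real.log_pos one_lt_two
  have hlog2' : Real.log 2 ≤ 1 := by
    linarith [Real.log_le_sub_one_of_pos (by norm_num : (0:ℝ) < 2)]
  -- C ≤ 2
  have hC : (∫ t in (0:ℝ)..1, (1 / Real.log t + 1 / Real.log (2 - t))) ≤ 2 := by
    calc (∫ t in (0:ℝ)..1, (1 / Real.log t + 1 / Real.log (2 - t)))
        ≤ ∫ _t in (0:ℝ)..1, (2:ℝ) := by
          apply intervalIntegral.integral_mono_on zero_le_one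
            (pvf_intInt le_rfl zero_le_one le_rfl) intervalIntegrable_const
          intro t ⟨ht0, ht1⟩
          rcases eq_or_lt_of_le ht0 with rfl | ht0'
          · simp only [Real.log_zero, div_zero, sub_zero, zero_add]
            rw [div_le_iff₀ hlog2]
            linarith [Real.log_two_gt_d9]
          · rcases eq_or_lt_of_le ht1 with rfl | ht1'
            · norm_num
            · exact (pvf_bounds ht0' ht1').2
      _ = 2 := by simp
  -- sum splitting
  set S1 := ∑ k ∈ Finset.Icc 1 n, (Nat.factorial (k - 1) : ℝ) * x / (Real.log x) ^ k with hS1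
  set S2 := ∑ k ∈ Finset.Icc 1 n, (Nat.factorial (k - 1) : ℝ) * (2 / (Real.log 2) ^ k) with hS2
  have hsum : (∑ k ∈ Finset.Icc 1 n, (Nat.factorial (k - 1) : ℝ) *
      (x / (Real.log x) ^ k - 2 / (Real.log 2) ^ k)) = S1 - S2 := by
    rw [hS1, hS2, ← Finset.sum_sub_distrib]
    apply Finset.sum_congr rfl
    intro k _
    ring
  -- 2 ≤ S2
  have hS2ge : (2:ℝ) ≤ S2 := by
    have hone : (1:ℕ) ∈ Finset.Icc 1 n := Finset.mem_Icc.2 ⟨le_rfl, hn⟩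
    have hterm : (Nat.factorial (1 - 1) : ℝ) * (2 / (Real.log 2) ^ 1) = 2 / Real.log 2 := by
      norm_num [Nat.factorial]
    have hle : (Nat.factorial (1 - 1) : ℝ) * (2 / (Real.log 2) ^ 1) ≤ S2 := by
      apply Finset.single_le_sum (f := fun k =>
        (Nat.factorial (k - 1) : ℝ) * (2 / (Real.log 2) ^ k)) _ hone
      intro k _
      positivity
    rw [hterm] at hle
    have : (2:ℝ) ≤ 2 / Real.log 2 := by
      rw [le_div_iff₀ hlog2]
      linarith
    linarith
  -- remainder
  have hR := remainder_bound hx n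
  have hfac : (0:ℝ) ≤ (Nat.factorial n : ℝ) := Nat.cast_nonneg _
  have hRn : (Nat.factorial n : ℝ) * (∫ t in (2:ℝ)..x, 1 / (Real.log t) ^ (n + 1))
      ≤ (Nat.factorial n : ℝ) * Real.sqrt x / (Real.log 2) ^ (n + 1) +
        (Nat.factorial n : ℝ) * 2 ^ (n + 1) * x / (Real.log x) ^ (n + 1) := by
    have := mul_le_mul_of_nonneg_left hR hfac
    calc (Nat.factorial n : ℝ) * (∫ t in (2:ℝ)..x, 1 / (Real.log t) ^ (n + 1))
        ≤ (Nat.factorial n : ℝ) * (Real.sqrt x / (Real.log 2) ^ (n + 1) +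
            2 ^ (n + 1) * x / (Real.log x) ^ (n + 1)) := this
      _ = (Nat.factorial n : ℝ) * Real.sqrt x / (Real.log 2) ^ (n + 1) +
          (Nat.factorial n : ℝ) * 2 ^ (n + 1) * x / (Real.log x) ^ (n + 1) := by ring
  rw [li_eq hx2, ibp_full hx2 n, hsum]
  linarith
end

section
/- Suppose that Ramanujan's inequality π(x)² < (e·x/log x)·π(x/e) holds for every real x ≥ x_R (with x_R > e). Then for every positive integer n and every x ≥ e^{n−1}·x_R, we have (e^n/Ξ_n(x))·(x/log x)^{2^n − 1}·π(x/e^n) > π(x)^{2^n}, where Ξ_n(x) = ∏_{k=1}^n (1 − (k−1)/log x)^{2^{n−k}}. -/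
noncomputable def primePi (x : ℝ) : ℕ := Nat.primeCounting ⌊x⌋₊

lemma sum_two_pow_aux (n : ℕ) : ∑ i ∈ Finset.range n, 2 ^ i = 2 ^ n - 1 := by
  induction n with
  | zero => simp
  | succ n ih =>
    rw [Finset.sum_range_succ, ih]
    have := Nat.two_pow_pos n
    omega

lemma hassani_scal (E B x L Q p : ℝ) (m k j : ℕ) (hk : k = m + 1) (hj : j = m + k)
    (hE : E ≠ 0) (hL : L ≠ 0) (hL1 : L - 1 ≠ 0) (hQ : Q ≠ 0) (hA : 1 - 1/L ≠ 0) :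
    (E*x/L)^k * (B/(Q/(1-1/L)^m) * (x/E/(L-1))^m * p) = B*E/Q * (x/L)^j * p := by
  subst hk hj
  field_simp
  simp only [div_pow, mul_pow, pow_add]
  field_simp

lemma hassani_aux (xR : ℝ) (hxR : Real.exp 1 < xR)
    (hRam : ∀ x : ℝ, xR ≤ x →
      (primePi x : ℝ) ^ 2 < (Real.exp 1 * x / Real.log x) * primePi (x / Real.exp 1))
    (n : ℕ) : ∀ x : ℝ, Real.exp 1 ^ n * xR ≤ x →
    (Real.exp 1 ^ (n + 1) /
          ∏ k ∈ Finset.Icc 1 (n + 1), (1 - ((k : ℝ) - 1) / Real.log x) ^ (2 ^ (n + 1 - k))) *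
        (x / Real.log x) ^ (2 ^ (n + 1) - 1) * (primePi (x / Real.exp 1 ^ (n + 1)) : ℝ) >
      (primePi x : ℝ) ^ (2 ^ (n + 1)) := by
  have hE1 : (1:ℝ) < Real.exp 1 := by
    have := Real.add_one_le_exp 1; linarith
  have hE0 : (0:ℝ) < Real.exp 1 := by linarith
  have hxR0 : 0 < xR := lt_trans hE0 hxR
  induction n with
  | zero =>
    intro x hx
    rw [pow_zero, one_mul] at hx
    have h := hRam x hx
    rw [mul_div_assoc] at h
    simpa using h
  | succ n ih =>
    intro x hx
    set E := Real.exp 1 with hE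
    -- basic bounds
    have hpow1 : (1:ℝ) ≤ E ^ (n+1) := by
      simpa using pow_le_pow_left₀ zero_le_one hE1.le (n+1)
    have hxRx : xR ≤ x := le_trans (le_mul_of_one_le_left hxR0.le hpow1) hx
    have hx0 : 0 < x := lt_of_lt_of_le hxR0 hxRx
    have hx1 : 1 < x := lt_of_lt_of_le (lt_trans hE1 hxR) hxRx
    -- log bound
    have hlogx : (n:ℝ) + 2 < Real.log x := by
      have h1 : Real.log (E^(n+1) * xR) ≤ Real.log x :=
        Real.log_le_log (by positivity) hx
      rw [Real.log_mul (by positivity) (ne_of_gt hxR0), Real.log_pow, hE, Real.log_exp] at h1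
      have h2 : 1 < Real.log xR := (Real.lt_log_iff_exp_lt hxR0).2 hxR
      push_cast at h1 ⊢
      linarith
    set L := Real.log x with hLdef
    have hn0 : (0:ℝ) ≤ (n:ℝ) := Nat.cast_nonneg n
    have hL1 : 1 < L := by linarith
    have hL0 : 0 < L := by linarith
    have hLne : L ≠ 0 := ne_of_gt hL0
    have hL1ne : L - 1 ≠ 0 := by intro h; rw [sub_eq_zero] at h; linarith
    have hA : (0:ℝ) < 1 - 1/L := by
      rw [sub_pos, div_lt_one hL0]; linarith
    -- IH applies at x / E
    have hy : E ^ n * xR ≤ x / E := by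
      rw [le_div_iff₀ hE0]
      calc E^n * xR * E = E^(n+1) * xR := by ring
        _ ≤ x := hx
    have h5 := ih (x / E) hy
    have hylog : Real.log (x / E) = L - 1 := by
      rw [Real.log_div (ne_of_gt hx0) (ne_of_gt hE0), hE, Real.log_exp, hLdef]
    rw [hylog] at h5
    have h2pos : 0 < 2 ^ (n+1) := Nat.two_pow_pos _
    have hsucc : (2:ℕ) ^ (n+1+1) = 2 * 2^(n+1) := by rw [pow_succ]; ring
    -- convert Icc products to range products
    have hIcc : ∀ (M : ℕ) (f : ℕ → ℝ), ∏ k ∈ Finset.Icc 1 (M+1), f k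
        = ∏ i ∈ Finset.range (M+1), f (1+i) := by
      intro M f
      rw [← Finset.Ico_add_one_right_eq_Icc, Finset.prod_Ico_eq_prod_range]
      norm_num
    have hΞ : ∏ k ∈ Finset.Icc 1 (n+1+1), (1 - ((k : ℝ) - 1) / L) ^ (2 ^ (n+1+1 - k))
        = ∏ i ∈ Finset.range (n+1), (1 - ((i:ℝ) + 1) / L) ^ (2 ^ (n - i)) := by
      rw [hIcc]
      rw [Finset.prod_range_succ']
      have h0 : (1 - (((1+0:ℕ):ℝ) - 1) / L) ^ (2 ^ (n+1+1 - (1+0))) = 1 := by norm_num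
      rw [h0, mul_one]
      apply Finset.prod_congr rfl
      intro i _
      have he : n+1+1 - (1+(i+1)) = n - i := by omega
      rw [he]
      congr 1
      push_cast
      ring
    have hΞy : ∏ k ∈ Finset.Icc 1 (n+1), (1 - ((k : ℝ) - 1) / (L - 1)) ^ (2 ^ (n+1 - k))
        = ∏ i ∈ Finset.range (n+1), (1 - (i:ℝ) / (L - 1)) ^ (2 ^ (n - i)) := by
      rw [hIcc]
      apply Finset.prod_congr rfl
      intro i _
      have he : n+1 - (1+i) = n - i := by omega
      rw [he]
      congr 1
      push_cast
      ring
    -- product positivity and identity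
    have hterm : ∀ i ∈ Finset.range (n+1), (0:ℝ) < 1 - ((i:ℝ) + 1) / L := by
      intro i hi
      rw [Finset.mem_range] at hi
      have : (i:ℝ) ≤ n := by exact_mod_cast Nat.lt_succ_iff.mp hi
      rw [sub_pos, div_lt_one hL0]; linarith
    have hΞpos : 0 < ∏ i ∈ Finset.range (n+1), (1 - ((i:ℝ) + 1) / L) ^ (2 ^ (n - i)) :=
      Finset.prod_pos fun i hi => pow_pos (hterm i hi) _
    have hsum : ∑ i ∈ Finset.range (n+1), 2 ^ (n - i) = 2 ^ (n+1) - 1 := by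
      rw [← sum_two_pow_aux]
      rw [← Finset.sum_range_reflect (fun j => 2 ^ j) (n+1)]
      apply Finset.sum_congr rfl
      intro i _
      rfl
    have hprod : ∏ i ∈ Finset.range (n+1), (1 - (i:ℝ) / (L - 1)) ^ (2 ^ (n - i))
        = (∏ i ∈ Finset.range (n+1), (1 - ((i:ℝ) + 1) / L) ^ (2 ^ (n - i)))
            / (1 - 1/L) ^ (2 ^ (n+1) - 1) := by
      rw [← hsum, ← Finset.prod_pow_eq_pow_sum, ← Finset.prod_div_distrib]
      apply Finset.prod_congr rfl
      intro i _
      rw [← div_pow]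
      congr 1
      field_simp
      ring
    -- main chain
    have h1 := hRam x hxRx
    rw [← hLdef] at h1
    have hc : (0:ℝ) < (E * x / L) ^ (2 ^ (n+1)) := by positivity
    have harg : x / E / E ^ (n+1) = x / E ^ (n+1+1) := by
      rw [div_div, ← pow_succ']
    rw [harg] at h5
    calc (primePi x : ℝ) ^ (2 ^ (n+1+1))
        = ((primePi x : ℝ) ^ 2) ^ (2 ^ (n+1)) := by
          rw [← pow_mul, ← hsucc]
      _ < ((E * x / L) * primePi (x / E)) ^ (2 ^ (n+1)) :=
          pow_lt_pow_left₀ h1 (sq_nonneg _) (Nat.two_pow_pos (n+1)).ne'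
      _ = (E * x / L) ^ (2 ^ (n+1)) * (primePi (x / E) : ℝ) ^ (2 ^ (n+1)) := mul_pow _ _ _
      _ < (E * x / L) ^ (2 ^ (n+1)) *
            ((E ^ (n+1) /
              ∏ k ∈ Finset.Icc 1 (n+1), (1 - ((k : ℝ) - 1) / (L-1)) ^ (2 ^ (n+1 - k))) *
              (x / E / (L-1)) ^ (2 ^ (n+1) - 1) * (primePi (x / E ^ (n+1+1)) : ℝ)) :=
          mul_lt_mul_of_pos_left h5 hc
      _ = (E ^ (n+1+1) /
            ∏ k ∈ Finset.Icc 1 (n+1+1), (1 - ((k : ℝ) - 1) / L) ^ (2 ^ (n+1+1 - k))) *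
            (x / L) ^ (2 ^ (n+1+1) - 1) * (primePi (x / E ^ (n+1+1)) : ℝ) := by
          rw [hΞ, hΞy, hprod, pow_succ E (n+1)]
          exact hassani_scal E (E^(n+1)) x L _ _ (2^(n+1) - 1) (2^(n+1)) (2^(n+1+1) - 1)
            (by omega) (by rw [hsucc]; omega)
            (ne_of_gt hE0) hLne hL1ne (ne_of_gt hΞpos) (ne_of_gt hA)

theorem hassani_generalization (xR : ℝ) (hxR : Real.exp 1 < xR)
    (hRam : ∀ x : ℝ, xR ≤ x →
      (primePi x : ℝ) ^ 2 < (Real.exp 1 * x / Real.log x) * primePi (x / Real.exp 1))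
    (n : ℕ) (hn : 0 < n) (x : ℝ) (hx : Real.exp 1 ^ (n - 1) * xR ≤ x) :
    (Real.exp 1 ^ n /
          ∏ k ∈ Finset.Icc 1 n, (1 - ((k : ℝ) - 1) / Real.log x) ^ (2 ^ (n - k))) *
        (x / Real.log x) ^ (2 ^ n - 1) * (primePi (x / Real.exp 1 ^ n) : ℝ) >
      (primePi x : ℝ) ^ (2 ^ n) := by
  obtain ⟨M, rfl⟩ : ∃ M, n = M + 1 := ⟨n - 1, by omega⟩
  simp only [Nat.add_sub_cancel] at hx
  exact hassani_aux xR hxR hRam M x hx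
end
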